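/- arXiv:1209.0938 — 6 statements merged into one kernel-verified Lean document; each statement's English description precedes it below -/
import Mathlib

section
/- Let T be a tower diagram and let c₁ = (i, j₁) and c₂ = (i, j₂) be two cells in the same tower T_i of T. Assume that c₁ and c₂ both have flight paths in T, with flight numbers f₁ and f₂ respectively. Then |f₁ − f₂| ≥ |j₁ − j₂|. Moreover, if |j₁ − j₂| = 1 then |f₁ − f₂| = 1. -/
abbrev Cell : Type := ℕ × ℕ

/-- A tower diagram: a finite set of cells `(i, j)` with `i ≥ 1` that is downward
closed in each column. -/
def IsTowerDiagram (T : Finset Cell) : Prop :=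
  ∀ c ∈ T, 1 ≤ c.1 ∧ ∀ j' ≤ c.2, (c.1, j') ∈ T

/-- The flight path of a cell of `T` (F1: direct flight, F2: zigzag flight). -/
inductive FlightPath (T : Finset Cell) : Cell → Finset Cell → Prop
  | direct (i j : ℕ) (hmem : (i, j) ∈ T)
      (hnone : ∀ c ∈ T, ¬(c.1 < i ∧ c.1 + c.2 + 1 = i + j)) :
      FlightPath T (i, j) {(i, j)}
  | zigzag (i j i' j' : ℕ) (P : Finset Cell)
      (hmem : (i, j) ∈ T) (hmem' : (i', j') ∈ T)
      (hleft : i' < i) (hdiag : i' + j' + 1 = i + j)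
      (hclosest : ∀ c ∈ T, c.1 < i → c.1 + c.2 + 1 = i + j → c.1 ≤ i')
      (hup : (i', j' + 1) ∈ T)
      (hrec : FlightPath T (i', j') P) :
      FlightPath T (i, j) (insert (i, j) (insert (i', j' + 1) P))

/-- `FlightNumber T c f`: `c` has a flight path in `T` whose lexicographically
least cell has coordinate sum `f`. -/
def FlightNumber (T : Finset Cell) (c : Cell) (f : ℕ) : Prop :=
  ∃ P : Finset Cell, FlightPath T c P ∧
    ∃ m ∈ P, m.1 + m.2 = f ∧ ∀ p ∈ P, m.1 < p.1 ∨ (m.1 = p.1 ∧ m.2 ≤ p.2)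

/-- A corner cell: it has a flight path and no cell on top of it. -/
def IsCornerCell (T : Finset Cell) (c : Cell) : Prop :=
  c ∈ T ∧ (c.1, c.2 + 1) ∉ T ∧ ∃ P, FlightPath T c P

/-- `SlideAux T lo α T'` : sliding `α` into the subdiagram of `T` consisting of
the towers in columns `≥ lo` does not terminate and produces `T'`. -/
inductive SlideAux (T : Finset Cell) : ℕ → ℕ → Finset Cell → Prop
  | s1a (lo α : ℕ)
      (h1 : ∀ c ∈ T, lo ≤ c.1 → c.1 + c.2 + 1 ≠ α)
      (h2 : ∀ c ∈ T, lo ≤ c.1 → c.1 + c.2 ≠ α) :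
      SlideAux T lo α (insert (α, 0) T)
  | s1c (lo α : ℕ) (T' : Finset Cell)
      (h1 : ∀ c ∈ T, lo ≤ c.1 → c.1 + c.2 + 1 ≠ α)
      (h2 : (α, 0) ∈ T) (h2' : lo ≤ α) (h3 : (α, 1) ∈ T)
      (hrec : SlideAux T (α + 1) (α + 1) T') :
      SlideAux T lo α T'
  | s2a (lo α i j : ℕ)
      (hmem : (i, j) ∈ T) (hlo : lo ≤ i) (hdiag : i + j + 1 = α)
      (hmin : ∀ c ∈ T, lo ≤ c.1 → c.1 + c.2 + 1 = α → i ≤ c.1)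
      (htop : (i, j + 1) ∉ T) :
      SlideAux T lo α (insert (i, j + 1) T)
  | s2c (lo α i j : ℕ) (T' : Finset Cell)
      (hmem : (i, j) ∈ T) (hlo : lo ≤ i) (hdiag : i + j + 1 = α)
      (hmin : ∀ c ∈ T, lo ≤ c.1 → c.1 + c.2 + 1 = α → i ≤ c.1)
      (h1 : (i, j + 1) ∈ T) (h2 : (i, j + 2) ∈ T)
      (hrec : SlideAux T (i + 1) (α + 1) T') :
      SlideAux T lo α T'

/-- The slide `α ↘ T` does not terminate and produces `T'`. -/
def Slides (T : Finset Cell) (α : ℕ) (T' : Finset Cell) : Prop :=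
  SlideAux T 0 α T'

/-- Successive sliding of the letters of a word into the empty diagram. -/
inductive SRDiagram : List ℕ → Finset Cell → Prop
  | nil : SRDiagram [] ∅
  | snoc {w : List ℕ} {T T' : Finset Cell} {a : ℕ}
      (hw : SRDiagram w T) (ha : Slides T a T') :
      SRDiagram (w ++ [a]) T'

/-- The shape (underlying diagram) of a labelled tableau. -/
def shapeOf (R : Finset (Cell × ℕ)) : Finset Cell := R.image Prod.fst

/-- The recording tableau of the SR algorithm: the cell created at step `k` is
labelled `k`. -/
inductive SRRecord : List ℕ → Finset (Cell × ℕ) → Prop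
  | nil : SRRecord [] ∅
  | snoc {w : List ℕ} {R : Finset (Cell × ℕ)} {a : ℕ} {c : Cell}
      (hw : SRRecord w R) (hc : c ∉ shapeOf R)
      (ha : Slides (shapeOf R) a (insert c (shapeOf R))) :
      SRRecord (w ++ [a]) (insert (c, w.length + 1) R)

/-- The sliding tableau of the SR algorithm: each new cell `(i, j)` is labelled
`i + j`. -/
inductive SRSliding : List ℕ → Finset (Cell × ℕ) → Prop
  | nil : SRSliding [] ∅
  | snoc {w : List ℕ} {S : Finset (Cell × ℕ)} {a : ℕ} {c : Cell}
      (hw : SRSliding w S) (hc : c ∉ shapeOf S)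
      (ha : Slides (shapeOf S) a (insert c (shapeOf S))) :
      SRSliding (w ++ [a]) (insert (c, c.1 + c.2) S)

/-- A tower tableau: a bijective labelling of a tower diagram by `{1, …, n}`. -/
def IsTowerTableau (R : Finset (Cell × ℕ)) : Prop :=
  IsTowerDiagram (shapeOf R) ∧
  (∀ p ∈ R, ∀ q ∈ R, p.1 = q.1 → p = q) ∧
  R.image Prod.snd = Finset.Icc 1 R.card

/-- The subtableau of cells with labels `≤ a`. -/
def labelLE (R : Finset (Cell × ℕ)) (a : ℕ) : Finset (Cell × ℕ) :=
  R.filter fun p => p.2 ≤ a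

/-- A standard tower tableau. -/
def IsStandardTowerTableau (R : Finset (Cell × ℕ)) : Prop :=
  IsTowerTableau R ∧
  ∀ p ∈ R, IsTowerDiagram (shapeOf (labelLE R p.2)) ∧
    IsCornerCell (shapeOf (labelLE R p.2)) p.1

/-- `ReadsTo R w` : `w` is the reading word of the tableau `R`: the `k`-th letter
is the flight number, in `shape (R_{≤ k})`, of the cell labelled `k`. -/
def ReadsTo (R : Finset (Cell × ℕ)) (w : List ℕ) : Prop :=
  w.length = R.card ∧
  ∀ k : Fin w.length, ∀ c : Cell, (c, (k : ℕ) + 1) ∈ R →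
    FlightNumber (shapeOf (labelLE R ((k : ℕ) + 1))) c (w.get k)

/-- A word of positive integers. -/
def IsPosWord (w : List ℕ) : Prop := ∀ a ∈ w, 1 ≤ a

/-- The permutation represented by a word: the product of the corresponding
adjacent transpositions `sᵢ = (i, i+1)`. -/
def permOf (w : List ℕ) : Equiv.Perm ℕ :=
  (w.map fun i => Equiv.swap i (i + 1)).prod

/-- A reduced word: of minimal length among the positive words representing the
same permutation. -/
def IsReducedWord (w : List ℕ) : Prop :=
  IsPosWord w ∧
    ∀ w' : List ℕ, IsPosWord w' → permOf w' = permOf w → w.length ≤ w'.length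

/-- A finite permutation: an element of the direct limit `⋃ₙ Sₙ`. -/
def FinitePerm (ω : Equiv.Perm ℕ) : Prop := ∃ w, IsPosWord w ∧ permOf w = ω

/-- The Coxeter length of a finite permutation. -/
noncomputable def coxLength (ω : Equiv.Perm ℕ) : ℕ :=
  sInf {n | ∃ w : List ℕ, IsPosWord w ∧ permOf w = ω ∧ w.length = n}

/-- The Rothe diagram of a permutation (pairs written `(row, column)`). -/
def RotheDiagram (ω : Equiv.Perm ℕ) : Set (ℕ × ℕ) :=
  {p | 1 ≤ p.1 ∧ 1 ≤ p.2 ∧ p.2 < ω p.1 ∧ p.1 < ω.symm p.2}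

/-- Interchanging rows `i` and `i + 1` of a diagram. -/
def rowSwap (i : ℕ) (D : Set (ℕ × ℕ)) : Set (ℕ × ℕ) :=
  {p | (Equiv.swap i (i + 1) p.1, p.2) ∈ D}

/-- The natural labelling of a tower diagram: labels `1, …, n` go bottom to top
within each tower, taking the towers from right to left. -/
def naturalTableau (T : Finset Cell) : Finset (Cell × ℕ) :=
  T.image fun c => (c, (T.filter fun d => c.1 < d.1).card + c.2 + 1)

/-- A word in natural form: a concatenation of blocks, each a strictly
increasing run of consecutive integers, whose initial terms strictly decrease. -/
def IsNaturalForm (η : List ℕ) : Prop :=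
  ∃ blocks : List (List ℕ),
    η = blocks.flatten ∧
    (∀ b ∈ blocks, ∃ s len : ℕ, 1 ≤ len ∧ b = List.range' s len) ∧
    List.Chain' (· > ·) (blocks.map fun b => b.headI)

section FlightAux

variable {T : Finset Cell}

private lemma tower_down (hT : IsTowerDiagram T) {a b : ℕ} (h : ((a, b) : Cell) ∈ T)
    {b' : ℕ} (hb : b' ≤ b) : ((a, b') : Cell) ∈ T :=
  (hT _ h).2 b' hb

private lemma FlightPath.mem_self {c : Cell} {P : Finset Cell} (h : FlightPath T c P) :
    c ∈ P := by
  cases h <;> simp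

private lemma FlightPath.col_le {c : Cell} {P : Finset Cell} (h : FlightPath T c P) :
    ∀ p ∈ P, p.1 ≤ c.1 := by
  induction h with
  | direct i j hmem hnone =>
    intro p hp
    simp only [Finset.mem_singleton] at hp
    subst hp; exact le_refl _
  | zigzag i j a b Q hmem hab hai hdiag hclosest hup hrecQ ih =>
    intro p hp
    rcases Finset.mem_insert.mp hp with rfl | hp
    · exact le_refl _
    rcases Finset.mem_insert.mp hp with rfl | hp
    · exact le_of_lt hai
    · exact le_trans (ih p hp) (le_of_lt hai)

private lemma FlightPath.sum_le {c : Cell} {P : Finset Cell} (h : FlightPath T c P) :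
    ∀ p ∈ P, p.1 + p.2 ≤ c.1 + c.2 := by
  induction h with
  | direct i j hmem hnone =>
    intro p hp
    simp only [Finset.mem_singleton] at hp
    subst hp; exact le_refl _
  | zigzag i j a b Q hmem hab hai hdiag hclosest hup hrecQ ih =>
    intro p hp
    rcases Finset.mem_insert.mp hp with rfl | hp
    · exact le_refl _
    rcases Finset.mem_insert.mp hp with rfl | hp
    · simp; omega
    · have := ih p hp; simp at this ⊢; omega

/-- The lex-min-with-sum predicate occurring in `FlightNumber`. -/
private def MinAt (P : Finset Cell) (f : ℕ) : Prop :=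
  ∃ m ∈ P, m.1 + m.2 = f ∧ ∀ p ∈ P, m.1 < p.1 ∨ (m.1 = p.1 ∧ m.2 ≤ p.2)

private lemma minAt_singleton {i j f : ℕ} (h : MinAt {((i, j) : Cell)} f) : f = i + j := by
  obtain ⟨m, hm, hsum, -⟩ := h
  simp only [Finset.mem_singleton] at hm
  subst hm; exact hsum.symm

private lemma minAt_zig {i j a b b' : ℕ} {Q : Finset Cell}
    (hab : ((a, b) : Cell) ∈ Q) (hbb : b < b')
    (hai : a < i) {f : ℕ}
    (h : MinAt (insert ((i, j) : Cell) (insert ((a, b') : Cell) Q)) f) : MinAt Q f := by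
  obtain ⟨m, hm, hsum, hmin⟩ := h
  have haux := hmin (a, b) (by simp [hab])
  have hmQ : m ∈ Q := by
    rcases Finset.mem_insert.mp hm with rfl | hm'
    · exfalso; simp at haux; omega
    rcases Finset.mem_insert.mp hm' with rfl | hq
    · exfalso; simp at haux; omega
    · exact hq
  exact ⟨m, hmQ, hsum, fun p hp => hmin p (by simp [hp])⟩

private lemma flight_lemA (hT : IsTowerDiagram T) :
    ∀ {c₁ : Cell} {P₁ : Finset Cell}, FlightPath T c₁ P₁ →
    ∀ {c₂ : Cell} {P₂ : Finset Cell}, FlightPath T c₂ P₂ →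
    c₂.1 ≤ c₁.1 → c₁.1 + c₁.2 < c₂.1 + c₂.2 →
    ∀ {f₁ f₂ : ℕ}, MinAt P₁ f₁ → MinAt P₂ f₂ →
    f₁ + (c₂.1 + c₂.2) ≤ f₂ + (c₁.1 + c₁.2) := by
  intro c₁ P₁ h₁
  induction h₁ with
  | direct i j hmem hnone =>
    intro c₂ P₂ h₂ hle hlt f₁ f₂ hm₁ hm₂
    have hf₁ : f₁ = i + j := minAt_singleton hm₁
    cases h₂ with
    | direct i₂ j₂ hmem₂ hnone₂ =>
      have hf₂ : f₂ = i₂ + j₂ := minAt_singleton hm₂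
      simp only at hle hlt ⊢
      omega
    | zigzag i₂ j₂ c e Q hmem₂ hce hci hdg hcl hup hrecQ =>
      exfalso
      simp only at hle hlt
      have hct : ((c, i + j - 1 - c) : Cell) ∈ T := tower_down hT hce (by omega)
      exact hnone _ hct ⟨show _ < _ by omega, show _ + _ + 1 = _ + _ by omega⟩
  | zigzag i j a b Q hmem hab hai hdiag hclosest hup hrecQ ih =>
    intro c₂ P₂ h₂ hle hlt f₁ f₂ hm₁ hm₂
    have hm₁' : MinAt Q f₁ :=
      minAt_zig hrecQ.mem_self (Nat.lt_succ_self b) hai hm₁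
    have hf₁le : f₁ ≤ a + b := by
      obtain ⟨m, hm, hsum, -⟩ := hm₁'
      have := hrecQ.sum_le m hm; omega
    cases h₂ with
    | direct i₂ j₂ hmem₂ hnone₂ =>
      have hf₂ : f₂ = i₂ + j₂ := minAt_singleton hm₂
      simp only at hle hlt ⊢
      omega
    | zigzag i₂ j₂ c e Q₂ hmem₂ hce hci hdg hcl hup₂ hrecQ₂ =>
      simp only at hle hlt ⊢
      have hm₂' : MinAt Q₂ f₂ :=
        minAt_zig hrecQ₂.mem_self (Nat.lt_succ_self e) hci hm₂
      have hca : c ≤ a := by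
        have hct : ((c, i + j - 1 - c) : Cell) ∈ T := tower_down hT hce (by omega)
        have := hclosest _ hct (show _ < _ by omega) (show _ + _ + 1 = _ + _ by omega)
        simpa using this
      have hkey := ih hrecQ₂ (show ((c, e) : Cell).1 ≤ ((a, b) : Cell).1 from hca)
        (show ((a, b) : Cell).1 + ((a, b) : Cell).2 < ((c, e) : Cell).1 + ((c, e) : Cell).2
          by simp; omega) hm₁' hm₂'
      simp only at hkey
      omega

private lemma flight_lemB (hT : IsTowerDiagram T) :
    ∀ {c : Cell} {P : Finset Cell}, FlightPath T c P →
    ∀ {P' : Finset Cell}, FlightPath T (c.1, c.2 + 1) P' →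
    ∀ {f f' : ℕ}, MinAt P f → MinAt P' f' → f' = f + 1 := by
  intro c P h
  induction h with
  | direct i j hmem hnone =>
    intro P' h' f f' hm hm'
    have hf : f = i + j := minAt_singleton hm
    have h'' : FlightPath T (i, j + 1) P' := h'
    cases h'' with
    | direct _ _ hmem₂ hnone₂ =>
      have hf' : f' = i + (j + 1) := minAt_singleton hm'
      omega
    | zigzag _ _ c e Q hmem₂ hce hci hdg hcl hup hrecQ =>
      exfalso
      have hct : ((c, e - 1) : Cell) ∈ T := tower_down hT hce (by omega)
      exact hnone _ hct ⟨show _ < _ by omega, show _ + _ + 1 = _ + _ by omega⟩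
  | zigzag i j a b Q hmem hab hai hdiag hclosest hup hrecQ ih =>
    intro P' h' f f' hm hm'
    have hmQ : MinAt Q f :=
      minAt_zig hrecQ.mem_self (Nat.lt_succ_self b) hai hm
    have h'' : FlightPath T (i, j + 1) P' := h'
    cases h'' with
    | direct _ _ hmem₂ hnone₂ =>
      exfalso
      exact hnone₂ _ hup ⟨show _ < _ by omega, show _ + _ + 1 = _ + _ by omega⟩
    | zigzag _ _ c e Q₂ hmem₂ hce hci hdg hcl hup₂ hrecQ₂ =>
      have hca : c = a ∧ e = b + 1 := by
        have hct : ((c, e - 1) : Cell) ∈ T := tower_down hT hce (by omega)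
        have h1 := hclosest _ hct (show _ < _ by omega) (show _ + _ + 1 = _ + _ by omega)
        have h2 := hcl _ hup (show _ < _ by omega) (show _ + _ + 1 = _ + _ by omega)
        simp at h1 h2
        omega
      obtain ⟨rfl, rfl⟩ := hca
      have hmQ₂ : MinAt Q₂ f' :=
        minAt_zig hrecQ₂.mem_self (Nat.lt_succ_self (b + 1)) hci hm'
      exact ih hrecQ₂ hmQ hmQ₂

end FlightAux
/-- If two cells in the same tower of a tower diagram have
flight numbers `f₁`, `f₂`, then `|f₁ - f₂| ≥ |j₁ - j₂|`; moreover if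
`|j₁ - j₂| = 1` then `|f₁ - f₂| = 1`. -/
theorem flightNumber_distance_in_tower
    (T : Finset Cell) (hT : IsTowerDiagram T)
    (i j₁ j₂ f₁ f₂ : ℕ)
    (h₁ : ((i, j₁) : Cell) ∈ T) (h₂ : ((i, j₂) : Cell) ∈ T)
    (hf₁ : FlightNumber T (i, j₁) f₁) (hf₂ : FlightNumber T (i, j₂) f₂) :
    |(f₁ : ℤ) - (f₂ : ℤ)| ≥ |(j₁ : ℤ) - (j₂ : ℤ)| ∧
      (|(j₁ : ℤ) - (j₂ : ℤ)| = 1 → |(f₁ : ℤ) - (f₂ : ℤ)| = 1) := by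
  obtain ⟨P₁, hP₁, hM₁x⟩ := hf₁
  obtain ⟨P₂, hP₂, hM₂x⟩ := hf₂
  have hM₁ : MinAt P₁ f₁ := hM₁x
  have hM₂ : MinAt P₂ f₂ := hM₂x
  have key : ∀ {ja jb fa fb : ℕ} {Pa Pb : Finset Cell},
      FlightPath T (i, ja) Pa → MinAt Pa fa →
      FlightPath T (i, jb) Pb → MinAt Pb fb → ja < jb → fa + jb ≤ fb + ja := by
    intro ja jb fa fb Pa Pb hPa hMa hPb hMb hab
    have := flight_lemA hT hPa hPb (le_refl i)
      (show (i, ja).1 + (i, ja).2 < (i, jb).1 + (i, jb).2 by simp; omega) hMa hMb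
    simp only at this
    omega
  have keyadj : ∀ {ja fa fb : ℕ} {Pa Pb : Finset Cell},
      FlightPath T (i, ja) Pa → MinAt Pa fa →
      FlightPath T (i, ja + 1) Pb → MinAt Pb fb → fb = fa + 1 := by
    intro ja fa fb Pa Pb hPa hMa hPb hMb
    exact flight_lemB hT hPa hPb hMa hMb
  rcases Nat.lt_trichotomy j₁ j₂ with h | h | h
  · have k := key hP₁ hM₁ hP₂ hM₂ h
    constructor
    · rcases abs_cases ((f₁ : ℤ) - f₂) with ⟨e1, e1'⟩ | ⟨e1, e1'⟩ <;>
        rcases abs_cases ((j₁ : ℤ) - j₂) with ⟨e2, e2'⟩ | ⟨e2, e2'⟩ <;>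
        rw [e1, e2] <;> omega
    · intro habs
      have hj : j₂ = j₁ + 1 := by
        rcases abs_cases ((j₁ : ℤ) - j₂) with ⟨e2, e2'⟩ | ⟨e2, e2'⟩ <;>
          rw [e2] at habs <;> omega
      subst hj
      have hf : f₂ = f₁ + 1 := keyadj hP₁ hM₁ hP₂ hM₂
      rcases abs_cases ((f₁ : ℤ) - f₂) with ⟨e1, e1'⟩ | ⟨e1, e1'⟩ <;> rw [e1] <;> omega
  · subst h
    refine ⟨by simp, fun habs => ?_⟩
    simp at habs
  · have k := key hP₂ hM₂ hP₁ hM₁ h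
    constructor
    · rcases abs_cases ((f₁ : ℤ) - f₂) with ⟨e1, e1'⟩ | ⟨e1, e1'⟩ <;>
        rcases abs_cases ((j₁ : ℤ) - j₂) with ⟨e2, e2'⟩ | ⟨e2, e2'⟩ <;>
        rw [e1, e2] <;> omega
    · intro habs
      have hj : j₁ = j₂ + 1 := by
        rcases abs_cases ((j₁ : ℤ) - j₂) with ⟨e2, e2'⟩ | ⟨e2, e2'⟩ <;>
          rw [e2] at habs <;> omega
      subst hj
      have hf : f₁ = f₂ + 1 := keyadj hP₂ hM₂ hP₁ hM₁
      rcases abs_cases ((f₁ : ℤ) - f₂) with ⟨e1, e1'⟩ | ⟨e1, e1'⟩ <;> rw [e1] <;> omega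
end

section
/- Let T be a tower diagram and let α be a positive integer such that the slide α^↘T does not terminate, so that α^↘T = T ∪ {d} for a single new cell d. Then d is a corner cell of the diagram α^↘T and flight#(d, α^↘T) = α. -/
lemma slideAux_key (T : Finset Cell) (hT : IsTowerDiagram T) (lo α : ℕ) (T' : Finset Cell)
    (h : SlideAux T lo α T') : lo ≤ α →
    ∃ d e P, d ∉ T ∧ T' = insert d T ∧ α ≤ d.1 + d.2 ∧ (d.1, d.2 + 1) ∉ T ∧
      e ∈ insert d T ∧ e.1 + e.2 = α ∧ lo ≤ e.1 ∧
      (∀ c ∈ T, lo ≤ c.1 → c.1 < e.1 → c.1 + c.2 + 1 ≠ α) ∧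
      (∀ p ∈ P, e.1 < p.1 ∨ (e.1 = p.1 ∧ e.2 < p.2)) ∧
      ∀ Q, FlightPath (insert d T) e Q → FlightPath (insert d T) d (P ∪ Q) := by
  induction h with
  | s1a lo α h1 h2 =>
    intro hle
    have hdT : ((α : ℕ), 0) ∉ T := fun hmem => h2 _ hmem (by simpa using hle) (by simp)
    refine ⟨(α, 0), (α, 0), ∅, hdT, rfl, by simp, ?_, Finset.mem_insert_self _ _, by simp,
      by simpa using hle, ?_, by simp, ?_⟩
    · intro hmem
      exact hdT ((hT _ hmem).2 0 (by simp))
    · intro c hc hc1 hc2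
      exact h1 c hc hc1
    · intro Q hQ
      simpa using hQ
  | s1c lo α T' h1 h2 h2' h3 hrec ih =>
    intro hle
    obtain ⟨d, e, P, hd1, hd2, hd3, hd4, he5, he6, he7, hNL, hlex, hPP⟩ := ih le_rfl
    obtain ⟨a, b⟩ := e
    simp only at he6 he7 hNL hlex
    refine ⟨d, (α, 0), insert (a, b) (insert (α, 1) P), hd1, hd2, by omega, hd4,
      Finset.mem_insert_of_mem h2, by simp, by simpa using hle, ?_, ?_, ?_⟩
    · intro c hc hc1 hc2
      exact h1 c hc hc1
    · intro p hp
      simp only [Finset.mem_insert] at hp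
      rcases hp with rfl | rfl | hp
      · left; simp; omega
      · right; simp
      · rcases hlex p hp with h' | ⟨h', _⟩ <;> [left; left] <;> simp <;> omega
    · intro Q hQ
      have hstep : FlightPath (insert d T) (a, b) (insert (a, b) (insert (α, 0 + 1) Q)) := by
        refine FlightPath.zigzag a b α 0 Q he5 (Finset.mem_insert_of_mem h2) (by omega)
          (by omega) ?_ (Finset.mem_insert_of_mem h3) hQ
        intro c _ _ hc
        omega
      have := hPP _ hstep
      have heq : insert (a, b) (insert ((α : ℕ), 1) P) ∪ Q
          = P ∪ insert (a, b) (insert ((α : ℕ), 0 + 1) Q) := by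
        ext x
        simp only [Finset.mem_union, Finset.mem_insert]
        tauto
      rwa [heq]
  | s2a lo α i j hmem hlo hdiag hmin htop =>
    intro hle
    refine ⟨(i, j + 1), (i, j + 1), ∅, htop, rfl, by simp; omega, ?_,
      Finset.mem_insert_self _ _, by simp; omega, by simpa using hlo, ?_, by simp, ?_⟩
    · intro hmem'
      exact htop ((hT _ hmem').2 (j + 1) (by simp))
    · intro c hc hc1 hc2 hc3
      have := hmin c hc hc1 hc3
      simp only at hc2
      omega
    · intro Q hQ
      simpa using hQ
  | s2c lo α i j T' hmem hlo hdiag hmin h1 h2 hrec ih =>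
    intro hle
    obtain ⟨d, e, P, hd1, hd2, hd3, hd4, he5, he6, he7, hNL, hlex, hPP⟩ := ih (by omega)
    obtain ⟨a, b⟩ := e
    simp only at he6 he7 hNL hlex
    refine ⟨d, (i, j + 1), insert (a, b) (insert (i, j + 2) P), hd1, hd2, by omega, hd4,
      Finset.mem_insert_of_mem h1, by simp; omega, by simpa using hlo, ?_, ?_, ?_⟩
    · intro c hc hc1 hc2 hc3
      have := hmin c hc hc1 hc3
      simp only at hc2
      omega
    · intro p hp
      simp only [Finset.mem_insert] at hp
      rcases hp with rfl | rfl | hp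
      · left; simp; omega
      · right; simp
      · rcases hlex p hp with h' | ⟨h', _⟩ <;> [left; left] <;> simp <;> omega
    · intro Q hQ
      have hstep : FlightPath (insert d T) (a, b) (insert (a, b) (insert (i, (j + 1) + 1) Q)) := by
        refine FlightPath.zigzag a b i (j + 1) Q he5 (Finset.mem_insert_of_mem h1) (by omega)
          (by omega) ?_ (by exact Finset.mem_insert_of_mem (by simpa using h2)) hQ
        intro c hc hc1 hc2
        simp only [Finset.mem_insert] at hc
        rcases hc with rfl | hc
        · omega
        · by_contra hgt
          exact hNL c hc (by omega) hc1 (by omega)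
      have := hPP _ hstep
      have heq : insert (a, b) (insert (i, j + 2) P) ∪ Q
          = P ∪ insert (a, b) (insert (i, (j + 1) + 1) Q) := by
        ext x
        simp only [Finset.mem_union, Finset.mem_insert]
        tauto
      rwa [heq]

/-- If the slide of `α` into `T` does not terminate, producing
the single new cell `d`, then `d` is a corner cell of `α ↘ T` and its flight
number in `α ↘ T` is `α`. -/
theorem slide_new_cell_is_corner_with_flightNumber
    (T : Finset Cell) (hT : IsTowerDiagram T)
    (α : ℕ) (hα : 1 ≤ α)
    (d : Cell) (hd : d ∉ T)
    (hslide : Slides T α (insert d T)) :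
    IsCornerCell (insert d T) d ∧ FlightNumber (insert d T) d α := by
  obtain ⟨d', e, P, hd1, hd2, hd3, hd4, he5, he6, he7, hNL, hlex, hPP⟩ :=
    slideAux_key T hT 0 α (insert d T) hslide (Nat.zero_le _)
  have hdd : d = d' := by
    have : d ∈ insert d' T := hd2 ▸ Finset.mem_insert_self d T
    rcases Finset.mem_insert.mp this with h | h
    · exact h
    · exact absurd h hd
  subst hdd
  obtain ⟨a, b⟩ := e
  simp only at he6 hNL hlex
  have hbot : FlightPath (insert d T) (a, b) {(a, b)} := by
    refine FlightPath.direct a b he5 ?_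
    rintro c hc ⟨hc1, hc2⟩
    simp only [Finset.mem_insert] at hc
    rcases hc with rfl | hc
    · omega
    · exact hNL c hc (Nat.zero_le _) hc1 (by omega)
  have hpath := hPP _ hbot
  constructor
  · refine ⟨Finset.mem_insert_self _ _, ?_, ⟨_, hpath⟩⟩
    simp only [Finset.mem_insert]
    rintro (h | h)
    · exact absurd (congrArg Prod.snd h) (by simp)
    · exact hd4 h
  · refine ⟨_, hpath, (a, b), ?_, he6, ?_⟩
    · simp [Finset.mem_union]
    · intro p hp
      rcases Finset.mem_union.mp hp with hp | hp
      · rcases hlex p hp with h' | ⟨h', h''⟩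
        · exact Or.inl h'
        · exact Or.inr ⟨h', le_of_lt h''⟩
      · simp only [Finset.mem_singleton] at hp
        subst hp
        exact Or.inr ⟨rfl, le_rfl⟩
end

section
/- Let T be a tower diagram and let c be a corner cell of T with flight number β. Then sliding β into the diagram c^↖T (T with the cell c removed) does not terminate and β^↘(c^↖T) = T. -/
lemma mem_flightPath {T : Finset Cell} {c : Cell} {P : Finset Cell}
    (h : FlightPath T c P) : c ∈ P := by
  induction h with
  | direct i j _ _ => exact Finset.mem_singleton_self _
  | zigzag i j i' j' P _ _ _ _ _ _ _ _ => exact Finset.mem_insert_self _ _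

/-- One step of the slide, at a cell `(i, j)` of the flight path: either
`(i, j)` is the erased corner itself (and the slide finishes by restoring it),
or the slide continues with the given continuation. -/
lemma slide_step {T : Finset Cell} (hT : IsTowerDiagram T) {c₀ : Cell}
    {i j : ℕ} (hmem : (i, j) ∈ T) (lo : ℕ) (hlo : lo ≤ i)
    (hmin : ∀ d ∈ T, lo ≤ d.1 → d.1 + d.2 + 1 = i + j → i ≤ d.1)
    (hcase : (i, j) = c₀ ∨
      (i < c₀.1 ∧ (i, j + 1) ∈ T ∧ SlideAux (T.erase c₀) (i + 1) (i + j + 1) T)) :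
    SlideAux (T.erase c₀) lo (i + j) T := by
  rcases hcase with hceq | ⟨hlt, habove, K⟩
  · subst hceq
    cases j with
    | zero =>
      have h1 : ∀ d ∈ T.erase (i, 0), lo ≤ d.1 → d.1 + d.2 + 1 ≠ i + 0 := by
        intro d hd hlod heq
        have hdT := Finset.mem_of_mem_erase hd
        have := hmin d hdT hlod heq
        omega
      have h2 : ∀ d ∈ T.erase (i, 0), lo ≤ d.1 → d.1 + d.2 ≠ i + 0 := by
        intro d hd hlod heq
        have hdT := Finset.mem_of_mem_erase hd
        have hdne : d ≠ (i, 0) := Finset.ne_of_mem_erase hd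
        rcases lt_trichotomy d.1 i with h | h | h
        · have hd2 : 1 ≤ d.2 := by omega
          have hdown : (d.1, d.2 - 1) ∈ T := (hT d hdT).2 (d.2 - 1) (by omega)
          have := hmin (d.1, d.2 - 1) hdown hlod (by simp; omega)
          simp at this; omega
        · exact hdne (Prod.ext_iff.mpr ⟨h, by omega⟩)
        · omega
      have hres := SlideAux.s1a (T := T.erase (i, 0)) lo (i + 0) h1 h2
      have heq : insert ((i + 0 : ℕ), (0 : ℕ)) (T.erase (i, 0)) = T := by
        simpa using Finset.insert_erase hmem
      rwa [heq] at hres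
    | succ j₀ =>
      have hdown : (i, j₀) ∈ T := (hT _ hmem).2 j₀ (by omega)
      have hmem' : (i, j₀) ∈ T.erase (i, j₀ + 1) := by
        refine Finset.mem_erase.mpr ⟨?_, hdown⟩
        simp [Prod.ext_iff]
      have hres := SlideAux.s2a (T := T.erase (i, j₀ + 1)) lo (i + (j₀ + 1)) i j₀
        hmem' hlo (by omega)
        (fun d hd hlod hdiag => hmin d (Finset.mem_of_mem_erase hd) hlod hdiag)
        (Finset.notMem_erase _ _)
      have heq : insert ((i : ℕ), j₀ + 1) (T.erase (i, j₀ + 1)) = T :=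
        Finset.insert_erase hmem
      rwa [heq] at hres
  · have hne : ∀ b : ℕ, ((i : ℕ), b) ≠ c₀ := by
      intro b h
      have : c₀.1 = i := by rw [← h]
      omega
    cases j with
    | zero =>
      refine SlideAux.s1c lo (i + 0) T ?_ ?_ ?_ ?_ ?_
      · intro d hd hlod heq
        have := hmin d (Finset.mem_of_mem_erase hd) hlod heq
        omega
      · exact Finset.mem_erase.mpr ⟨by simpa using hne 0, by simpa using hmem⟩
      · omega
      · exact Finset.mem_erase.mpr ⟨by simpa using hne 1, by simpa using habove⟩
      · simpa using K
    | succ j₀ =>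
      have hdown : (i, j₀) ∈ T := (hT _ hmem).2 j₀ (by omega)
      refine SlideAux.s2c lo (i + (j₀ + 1)) i j₀ T
        (Finset.mem_erase.mpr ⟨hne j₀, hdown⟩) hlo (by omega)
        (fun d hd hlod hdiag => hmin d (Finset.mem_of_mem_erase hd) hlod hdiag)
        (Finset.mem_erase.mpr ⟨hne (j₀ + 1), hmem⟩)
        (Finset.mem_erase.mpr ⟨hne (j₀ + 2), by simpa [Nat.add_assoc] using habove⟩)
        ?_
      simpa [Nat.add_assoc] using K

lemma slide_of_flightPath {T : Finset Cell} (hT : IsTowerDiagram T) :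
    ∀ {c : Cell} {P : Finset Cell}, FlightPath T c P →
    ∀ c₀ : Cell, c₀ ∈ T →
    (c = c₀ ∨ (c.1 < c₀.1 ∧ (c.1, c.2 + 1) ∈ T ∧
      SlideAux (T.erase c₀) (c.1 + 1) (c.1 + c.2 + 1) T)) →
    ∀ m ∈ P, (∀ p ∈ P, m.1 < p.1 ∨ (m.1 = p.1 ∧ m.2 ≤ p.2)) →
    SlideAux (T.erase c₀) 0 (m.1 + m.2) T := by
  intro c P hfp
  induction hfp with
  | direct i j hmem hnone =>
    intro c₀ hc₀ hcase m hm hlex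
    have hmeq : m = (i, j) := Finset.mem_singleton.mp hm
    subst hmeq
    refine slide_step hT hmem 0 (Nat.zero_le _) ?_ hcase
    intro d hd _ hdiag
    by_contra h
    exact hnone d hd ⟨by omega, hdiag⟩
  | zigzag i j i' j' P' hmem hmem' hleft hdiag hclosest hup hrec ih =>
    intro c₀ hc₀ hcase m hm hlex
    have hP' : (i', j') ∈ P' := mem_flightPath hrec
    have hlex' := hlex (i', j')
      (Finset.mem_insert_of_mem (Finset.mem_insert_of_mem hP'))
    have hm' : m ∈ P' := by
      rcases Finset.mem_insert.mp hm with h | h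
      · exfalso
        have h1 : m.1 = i := by rw [h]
        rcases hlex' with h' | ⟨h1', h2'⟩ <;> omega
      · rcases Finset.mem_insert.mp h with h | h
        · exfalso
          have h1 : m.1 = i' := by rw [h]
          have h2 : m.2 = j' + 1 := by rw [h]
          rcases hlex' with h' | ⟨h1', h2'⟩ <;> omega
        · exact h
    have hlt' : i' < c₀.1 := by
      rcases hcase with h | ⟨h, _, _⟩
      · have : c₀.1 = i := by rw [← h]
        omega
      · omega
    refine ih c₀ hc₀ (Or.inr ⟨hlt', hup, ?_⟩) m hm' ?_
    · have hmin' : ∀ d ∈ T, i' + 1 ≤ d.1 → d.1 + d.2 + 1 = i + j → i ≤ d.1 := by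
        intro d hd h1 h2
        by_contra h3
        have := hclosest d hd (by omega) h2
        omega
      have := slide_step hT hmem (i' + 1) (by omega) hmin' hcase
      have heq : i' + j' + 1 = i + j := hdiag
      rw [heq]
      exact this
    · intro p hp
      exact hlex p (Finset.mem_insert_of_mem (Finset.mem_insert_of_mem hp))

/-- If `c` is a corner cell of the tower diagram `T` with
flight number `β`, then sliding `β` into `T` with `c` removed does not
terminate and recovers `T`. -/
theorem slide_flightNumber_into_erase_corner
    (T : Finset Cell) (hT : IsTowerDiagram T)
    (c : Cell) (hc : IsCornerCell T c)
    (β : ℕ) (hβ : FlightNumber T c β) :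
    Slides (T.erase c) β T := by
  obtain ⟨P, hfp, m, hm, hmsum, hlex⟩ := hβ
  have := slide_of_flightPath hT hfp c hc.1 (Or.inl rfl) m hm hlex
  rwa [hmsum] at this
end

section
/- Let T be a tower diagram and let α and β be positive integers with |β − α| ≥ 2. Then either both iterated slides α^↘(β^↘T) and β^↘(α^↘T) are defined and α^↘(β^↘T) = β^↘(α^↘T), or both iterated slides terminate without result. -/
section SlidesFarCommute

private lemma cell_ne_of_mem {T : Finset Cell} {c d : Cell} (hd : d ∈ insert c T)
    (hne : d ≠ c) : d ∈ T := by
  rcases Finset.mem_insert.mp hd with h | h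
  · exact absurd h hne
  · exact h

private lemma added_cell_eq {T T₂ : Finset Cell} {p c : Cell} (hc : c ∉ T)
    (h2 : T₂ = insert c T) (h3 : T₂ = insert p T) : c = p := by
  have hmem : c ∈ insert p T := by rw [← h3, h2]; exact Finset.mem_insert_self c T
  rcases Finset.mem_insert.mp hmem with h | h
  · exact h
  · exact absurd h hc

/-- Every non-terminating slide inserts a single new cell, in a column `≥ lo`,
with coordinate sum `≥` the slide value. -/
private lemma slide_added {T : Finset Cell} {m u : ℕ} {T₂ : Finset Cell}
    (h : SlideAux T m u T₂) : m ≤ u →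
    ∃ x y : ℕ, (x, y) ∉ T ∧ T₂ = insert (x, y) T ∧ m ≤ x ∧ u ≤ x + y := by
  induction h with
  | s1a lo a h1 h2 =>
    intro hmu
    exact ⟨a, 0, fun hm => h2 (a, 0) hm hmu rfl, rfl, hmu, Nat.le_refl _⟩
  | s1c lo a T' h1 h2 h2' h3 hrec ih =>
    intro hmu
    obtain ⟨x, y, hx1, hx2, hx3, hx4⟩ := ih (Nat.le_refl _)
    exact ⟨x, y, hx1, hx2, by omega, by omega⟩
  | s2a lo a i j hmem hlo hdiag hmin htop =>
    intro _
    exact ⟨i, j + 1, htop, rfl, hlo, by omega⟩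
  | s2c lo a i j T' hmem hlo hdiag hmin h1 h2 hrec ih =>
    intro _
    obtain ⟨x, y, hx1, hx2, hx3, hx4⟩ := ih (by omega)
    exact ⟨x, y, hx1, hx2, by omega, by omega⟩

/-- The coordinate sum of the added cell is at least the slide value. -/
private lemma slide_added_sum {T : Finset Cell} {m u : ℕ} {T₂ : Finset Cell}
    (h : SlideAux T m u T₂) {x y : ℕ} (hxy : (x, y) ∉ T) (hT₂ : T₂ = insert (x, y) T) :
    u ≤ x + y := by
  induction h with
  | s1a lo a h1 h2 =>
    have := added_cell_eq hxy hT₂ rfl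
    rw [Prod.mk.injEq] at this
    omega
  | s1c lo a T' h1 h2 h2' h3 hrec ih => have := ih hT₂; omega
  | s2a lo a i j hmem hlo hdiag hmin htop =>
    have := added_cell_eq hxy hT₂ rfl
    rw [Prod.mk.injEq] at this
    omega
  | s2c lo a i j T' hmem hlo hdiag hmin h1 h2 hrec ih => have := ih hT₂; omega

/-- The column of the added cell is at least `m`. -/
private lemma slide_added_col {T : Finset Cell} {m u : ℕ} {T₂ : Finset Cell}
    (h : SlideAux T m u T₂) {x y : ℕ} (hmu : m ≤ u) (hxy : (x, y) ∉ T)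
    (hT₂ : T₂ = insert (x, y) T) : m ≤ x := by
  obtain ⟨x', y', h1, h2, h3, h4⟩ := slide_added h hmu
  have := added_cell_eq hxy hT₂ h2
  rw [Prod.mk.injEq] at this
  omega

/-- **Master lemma.** If a slide from `(m, u)` on `T` eventually adds the cell
`(x, y)`, and there is an increasing chain of columns `q a < q (a+1) < ⋯`,
starting at a column `≥ m`, where the column `q w` contains cells of coordinate
sums `w` and `w + 1`, with `a + 2 = u`, then the added cell lies in a column
`x ≤ q (x + y - 2)`. -/
private lemma slide_master {T : Finset Cell} {m u : ℕ} {T₂ : Finset Cell}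
    (h : SlideAux T m u T₂) :
    ∀ {x y : ℕ}, (x, y) ∉ T → T₂ = insert (x, y) T →
    ∀ (q : ℕ → ℕ) (a b : ℕ), a + 2 = u → b + 2 = x + y →
      (∀ w, a ≤ w → w ≤ b → ∃ j, q w + j = w ∧ (q w, j) ∈ T ∧ (q w, j + 1) ∈ T) →
      (∀ w, a ≤ w → w < b → q w < q (w + 1)) →
      m ≤ q a → x ≤ q b := by
  induction h with
  | s1a lo u' h1 h2 =>
    intro x y hxy hT₂ q a b hau hbx hcell hmono hma
    have heq := added_cell_eq hxy hT₂ rfl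
    rw [Prod.mk.injEq] at heq
    have hab : a = b := by omega
    obtain ⟨j, hj1, hj2, hj3⟩ := hcell a (Nat.le_refl _) (by omega)
    exact absurd (by omega : q a + (j + 1) + 1 = u') (h1 (q a, j + 1) hj3 hma)
  | s1c lo u' T' h1 h2 h2' h3 hrec ih =>
    intro x y hxy hT₂ q a b hau hbx hcell hmono hma
    have hsum : u' + 1 ≤ x + y := slide_added_sum hrec hxy hT₂
    obtain ⟨j, hj1, hj2, hj3⟩ := hcell a (Nat.le_refl _) (by omega)
    exact absurd (by omega : q a + (j + 1) + 1 = u') (h1 (q a, j + 1) hj3 hma)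
  | s2a lo u' i j hmem hlo hdiag hmin htop =>
    intro x y hxy hT₂ q a b hau hbx hcell hmono hma
    have heq := added_cell_eq hxy hT₂ rfl
    rw [Prod.mk.injEq] at heq
    have hab : a = b := by omega
    subst hab
    obtain ⟨jw, hj1, hj2, hj3⟩ := hcell a (Nat.le_refl _) (by omega)
    have hle : i ≤ q a := hmin (q a, jw + 1) hj3 hma (by omega)
    omega
  | s2c lo u' i j T' hmem hlo hdiag hmin h1 h2 hrec ih =>
    intro x y hxy hT₂ q a b hau hbx hcell hmono hma
    have hsum : u' + 1 ≤ x + y := slide_added_sum hrec hxy hT₂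
    have hab : a < b := by omega
    obtain ⟨jw, hj1, hj2, hj3⟩ := hcell a (Nat.le_refl _) (by omega)
    have hiqa : i ≤ q a := hmin (q a, jw + 1) hj3 hma (by omega)
    have hmono0 := hmono a (Nat.le_refl _) hab
    exact ih hxy hT₂ q (a + 1) b (by omega) hbx
      (fun w hw1 hw2 => hcell w (by omega) hw2)
      (fun w hw1 hw2 => hmono w (by omega) hw2) (by omega)

/-- **Chain extraction.** A successful slide from `(m, u)` adding the cell
`(x, y)` passes through an increasing chain of recursion columns `q w`
(`u ≤ w < x + y`), each containing cells of sums `w` and `w + 1`, all in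
columns `< x` and `≥ m`. -/
private lemma slide_extract {T : Finset Cell} {m u : ℕ} {T₂ : Finset Cell}
    (h : SlideAux T m u T₂) :
    ∀ {x y : ℕ}, (x, y) ∉ T → T₂ = insert (x, y) T →
    ∃ q : ℕ → ℕ,
      (∀ w, u ≤ w → w + 1 ≤ x + y →
        (∃ j, q w + j = w ∧ (q w, j) ∈ T ∧ (q w, j + 1) ∈ T) ∧ m ≤ q w ∧ q w < x) ∧
      (∀ w, u ≤ w → w + 2 ≤ x + y → q w < q (w + 1)) := by
  induction h with
  | s1a lo u' h1 h2 =>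
    intro x y hxy hT₂
    have heq := added_cell_eq hxy hT₂ rfl
    rw [Prod.mk.injEq] at heq
    exact ⟨fun _ => 0, fun w hw1 hw2 => by omega, fun w hw1 hw2 => by omega⟩
  | s1c lo u' T' h1 h2 h2' h3 hrec ih =>
    intro x y hxy hT₂
    obtain ⟨q', hq1, hq2⟩ := ih hxy hT₂
    have hxcol : u' + 1 ≤ x := slide_added_col hrec (Nat.le_refl _) hxy hT₂
    refine ⟨fun w => if w ≤ u' then u' else q' w, ?_, ?_⟩
    · intro w hw1 hw2
      rcases Nat.lt_or_ge u' w with hlt | hge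
      · have : ¬ (w ≤ u') := by omega
        simp only [if_neg this]
        obtain ⟨hc, hm, hx⟩ := hq1 w (by omega) hw2
        exact ⟨hc, by omega, hx⟩
      · have hwu : w = u' := by omega
        simp only [if_pos hge]
        exact ⟨⟨0, by omega, h2, h3⟩, h2', by omega⟩
    · intro w hw1 hw2
      rcases Nat.lt_or_ge u' w with hlt | hge
      · have n1 : ¬ (w ≤ u') := by omega
        have n2 : ¬ (w + 1 ≤ u') := by omega
        simp only [if_neg n1, if_neg n2]
        exact hq2 w (by omega) hw2
      · have hwu : w = u' := by omega
        simp only [if_pos hge, if_neg (show ¬ w + 1 ≤ u' by omega)]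
        have h5 := (hq1 (w + 1) (by omega) (by omega)).2.1
        omega
  | s2a lo u' i j hmem hlo hdiag hmin htop =>
    intro x y hxy hT₂
    have heq := added_cell_eq hxy hT₂ rfl
    rw [Prod.mk.injEq] at heq
    exact ⟨fun _ => 0, fun w hw1 hw2 => by omega, fun w hw1 hw2 => by omega⟩
  | s2c lo u' i j T' hmem hlo hdiag hmin h1 h2 hrec ih =>
    intro x y hxy hT₂
    obtain ⟨q', hq1, hq2⟩ := ih hxy hT₂
    have hxcol : i + 1 ≤ x := slide_added_col hrec (by omega) hxy hT₂
    refine ⟨fun w => if w ≤ u' then i else q' w, ?_, ?_⟩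
    · intro w hw1 hw2
      rcases Nat.lt_or_ge u' w with hlt | hge
      · have : ¬ (w ≤ u') := by omega
        simp only [if_neg this]
        obtain ⟨hc, hm, hx⟩ := hq1 w (by omega) hw2
        exact ⟨hc, by omega, hx⟩
      · have hwu : w = u' := by omega
        simp only [if_pos hge]
        exact ⟨⟨j + 1, by omega, h1, h2⟩, hlo, by omega⟩
    · intro w hw1 hw2
      rcases Nat.lt_or_ge u' w with hlt | hge
      · have n1 : ¬ (w ≤ u') := by omega
        have n2 : ¬ (w + 1 ≤ u') := by omega
        simp only [if_neg n1, if_neg n2]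
        exact hq2 w (by omega) hw2
      · have hwu : w = u' := by omega
        simp only [if_pos hge, if_neg (show ¬ w + 1 ≤ u' by omega)]
        have h5 := (hq1 (w + 1) (by omega) (by omega)).2.1
        omega

/-- The slide from state `(lo, v)` terminates without result. -/
private inductive FailAux (T : Finset Cell) : ℕ → ℕ → Prop
  | f1 (lo v : ℕ)
      (h1 : ∀ c ∈ T, lo ≤ c.1 → c.1 + c.2 + 1 ≠ v)
      (h2 : (v, 0) ∈ T) (h2' : lo ≤ v) (h3 : (v, 1) ∉ T) :
      FailAux T lo v
  | f1c (lo v : ℕ)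
      (h1 : ∀ c ∈ T, lo ≤ c.1 → c.1 + c.2 + 1 ≠ v)
      (h2 : (v, 0) ∈ T) (h2' : lo ≤ v) (h3 : (v, 1) ∈ T)
      (hrec : FailAux T (v + 1) (v + 1)) :
      FailAux T lo v
  | f2 (lo v i j : ℕ)
      (hmem : (i, j) ∈ T) (hlo : lo ≤ i) (hdiag : i + j + 1 = v)
      (hmin : ∀ c ∈ T, lo ≤ c.1 → c.1 + c.2 + 1 = v → i ≤ c.1)
      (h1 : (i, j + 1) ∈ T) (h2 : (i, j + 2) ∉ T) :
      FailAux T lo v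
  | f2c (lo v i j : ℕ)
      (hmem : (i, j) ∈ T) (hlo : lo ≤ i) (hdiag : i + j + 1 = v)
      (hmin : ∀ c ∈ T, lo ≤ c.1 → c.1 + c.2 + 1 = v → i ≤ c.1)
      (h1 : (i, j + 1) ∈ T) (h2 : (i, j + 2) ∈ T)
      (hrec : FailAux T (i + 1) (v + 1)) :
      FailAux T lo v

/-- A terminating slide excludes a successful one. -/
private lemma fail_not_slide {T : Finset Cell} {lo v : ℕ} (hf : FailAux T lo v) :
    ∀ {T' : Finset Cell}, SlideAux T lo v T' → False := by
  induction hf with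
  | f1 lo v h1 h2 h2' h3 =>
    intro T' hs
    cases hs with
    | s1a _ _ g1 g2 => exact g2 (v, 0) h2 h2' rfl
    | s1c _ _ _ g1 g2 g2' g3 grec => exact h3 g3
    | s2a _ _ i j gmem glo gdiag gmin gtop => exact h1 (i, j) gmem glo gdiag
    | s2c _ _ i j _ gmem glo gdiag gmin g1 g2 grec => exact h1 (i, j) gmem glo gdiag
  | f1c lo v h1 h2 h2' h3 hrec ih =>
    intro T' hs
    cases hs with
    | s1a _ _ g1 g2 => exact g2 (v, 0) h2 h2' rfl
    | s1c _ _ _ g1 g2 g2' g3 grec => exact ih grec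
    | s2a _ _ i j gmem glo gdiag gmin gtop => exact h1 (i, j) gmem glo gdiag
    | s2c _ _ i j _ gmem glo gdiag gmin g1 g2 grec => exact h1 (i, j) gmem glo gdiag
  | f2 lo v i j hmem hlo hdiag hmin h1 h2 =>
    intro T' hs
    cases hs with
    | s1a _ _ g1 g2 => exact g1 (i, j) hmem hlo hdiag
    | s1c _ _ _ g1 g2 g2' g3 grec => exact g1 (i, j) hmem hlo hdiag
    | s2a _ _ i' j' gmem glo gdiag gmin gtop =>
      have e1 : i = i' := Nat.le_antisymm (hmin (i', j') gmem glo gdiag) (gmin (i, j) hmem hlo hdiag)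
      have e2 : j = j' := by omega
      subst e1; subst e2
      exact gtop h1
    | s2c _ _ i' j' _ gmem glo gdiag gmin g1 g2 grec =>
      have e1 : i = i' := Nat.le_antisymm (hmin (i', j') gmem glo gdiag) (gmin (i, j) hmem hlo hdiag)
      have e2 : j = j' := by omega
      subst e1; subst e2
      exact h2 g2
  | f2c lo v i j hmem hlo hdiag hmin h1 h2 hrec ih =>
    intro T' hs
    cases hs with
    | s1a _ _ g1 g2 => exact g1 (i, j) hmem hlo hdiag
    | s1c _ _ _ g1 g2 g2' g3 grec => exact g1 (i, j) hmem hlo hdiag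
    | s2a _ _ i' j' gmem glo gdiag gmin gtop =>
      have e1 : i = i' := Nat.le_antisymm (hmin (i', j') gmem glo gdiag) (gmin (i, j) hmem hlo hdiag)
      have e2 : j = j' := by omega
      subst e1; subst e2
      exact gtop h1
    | s2c _ _ i' j' _ gmem glo gdiag gmin g1 g2 grec =>
      have e1 : i = i' := Nat.le_antisymm (hmin (i', j') gmem glo gdiag) (gmin (i, j) hmem hlo hdiag)
      have e2 : j = j' := by omega
      subst e1; subst e2
      exact ih grec

/-- Slides are deterministic. -/
private lemma slide_det {T : Finset Cell} {lo v : ℕ} {T₁ : Finset Cell}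
    (h : SlideAux T lo v T₁) : ∀ {T₂ : Finset Cell}, SlideAux T lo v T₂ → T₁ = T₂ := by
  induction h with
  | s1a lo v h1 h2 =>
    intro T₂ hs
    cases hs with
    | s1a _ _ g1 g2 => rfl
    | s1c _ _ _ g1 g2 g2' g3 grec => exact absurd rfl (h2 (v, 0) g2 g2')
    | s2a _ _ i j gmem glo gdiag gmin gtop => exact absurd gdiag (h1 (i, j) gmem glo)
    | s2c _ _ i j _ gmem glo gdiag gmin g1 g2 grec => exact absurd gdiag (h1 (i, j) gmem glo)
  | s1c lo v T' h1 h2 h2' h3 hrec ih =>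
    intro T₂ hs
    cases hs with
    | s1a _ _ g1 g2 => exact absurd rfl (g2 (v, 0) h2 h2')
    | s1c _ _ _ g1 g2 g2' g3 grec => exact ih grec
    | s2a _ _ i j gmem glo gdiag gmin gtop => exact absurd gdiag (h1 (i, j) gmem glo)
    | s2c _ _ i j _ gmem glo gdiag gmin g1 g2 grec => exact absurd gdiag (h1 (i, j) gmem glo)
  | s2a lo v i j hmem hlo hdiag hmin htop =>
    intro T₂ hs
    cases hs with
    | s1a _ _ g1 g2 => exact absurd hdiag (g1 (i, j) hmem hlo)
    | s1c _ _ _ g1 g2 g2' g3 grec => exact absurd hdiag (g1 (i, j) hmem hlo)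
    | s2a _ _ i' j' gmem glo gdiag gmin gtop =>
      have e1 : i = i' := Nat.le_antisymm (hmin (i', j') gmem glo gdiag) (gmin (i, j) hmem hlo hdiag)
      have e2 : j = j' := by omega
      subst e1; subst e2; rfl
    | s2c _ _ i' j' _ gmem glo gdiag gmin g1 g2 grec =>
      have e1 : i = i' := Nat.le_antisymm (hmin (i', j') gmem glo gdiag) (gmin (i, j) hmem hlo hdiag)
      have e2 : j = j' := by omega
      subst e1; subst e2
      exact absurd g1 htop
  | s2c lo v i j T' hmem hlo hdiag hmin h1 h2 hrec ih =>
    intro T₂ hs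
    cases hs with
    | s1a _ _ g1 g2 => exact absurd hdiag (g1 (i, j) hmem hlo)
    | s1c _ _ _ g1 g2 g2' g3 grec => exact absurd hdiag (g1 (i, j) hmem hlo)
    | s2a _ _ i' j' gmem glo gdiag gmin gtop =>
      have e1 : i = i' := Nat.le_antisymm (hmin (i', j') gmem glo gdiag) (gmin (i, j) hmem hlo hdiag)
      have e2 : j = j' := by omega
      subst e1; subst e2
      exact absurd h1 gtop
    | s2c _ _ i' j' _ gmem glo gdiag gmin g1 g2 grec =>
      have e1 : i = i' := Nat.le_antisymm (hmin (i', j') gmem glo gdiag) (gmin (i, j) hmem hlo hdiag)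
      have e2 : j = j' := by omega
      subst e1; subst e2
      exact ih grec

/-- Totality: on a tower diagram, from any state `(lo, v)` with `lo ≤ v`, the
slide either succeeds or terminates. -/
private lemma slide_total_aux {T : Finset Cell} (hT : IsTowerDiagram T) :
    ∀ (n lo v : ℕ), lo ≤ v → (T.sup fun c => c.1 + c.2) + 2 ≤ v + n →
      (∃ T', SlideAux T lo v T') ∨ FailAux T lo v := by
  intro n
  induction n with
  | zero =>
    intro lo v hlv hbound
    refine Or.inl ⟨_, SlideAux.s1a lo v ?_ ?_⟩
    · intro c hc hcl
      have h5 := Finset.le_sup (f := fun c : Cell => c.1 + c.2) hc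
      omega
    · intro c hc hcl
      have h5 := Finset.le_sup (f := fun c : Cell => c.1 + c.2) hc
      omega
  | succ n ih =>
    intro lo v hlv hbound
    by_cases hS : ∃ d ∈ T, lo ≤ d.1 ∧ d.1 + d.2 + 1 = v
    · obtain ⟨d₀, hd₀T, hd₀lo, hd₀diag⟩ := hS
      -- take the cell with minimal column among those on the diagonal
      obtain ⟨d₁, hd₁, hd₁min⟩ := Finset.exists_min_image
        (T.filter fun d => lo ≤ d.1 ∧ d.1 + d.2 + 1 = v) Prod.fst
        ⟨d₀, Finset.mem_filter.mpr ⟨hd₀T, hd₀lo, hd₀diag⟩⟩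
      obtain ⟨hd₁T, hd₁lo, hd₁diag⟩ := Finset.mem_filter.mp hd₁
      have hmin : ∀ c ∈ T, lo ≤ c.1 → c.1 + c.2 + 1 = v → d₁.1 ≤ c.1 :=
        fun c hc h1 h2 => hd₁min c (Finset.mem_filter.mpr ⟨hc, h1, h2⟩)
      have hd₁mem : (d₁.1, d₁.2) ∈ T := by rwa [Prod.mk.eta]
      by_cases hA : (d₁.1, d₁.2 + 1) ∈ T
      · by_cases hB : (d₁.1, d₁.2 + 2) ∈ T
        · rcases ih (d₁.1 + 1) (v + 1) (by omega) (by omega) with ⟨T', hT'⟩ | hf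
          · exact Or.inl ⟨T', SlideAux.s2c lo v d₁.1 d₁.2 T' hd₁mem hd₁lo hd₁diag hmin hA hB hT'⟩
          · exact Or.inr (FailAux.f2c lo v d₁.1 d₁.2 hd₁mem hd₁lo hd₁diag hmin hA hB hf)
        · exact Or.inr (FailAux.f2 lo v d₁.1 d₁.2 hd₁mem hd₁lo hd₁diag hmin hA hB)
      · exact Or.inl ⟨_, SlideAux.s2a lo v d₁.1 d₁.2 hd₁mem hd₁lo hd₁diag hmin hA⟩
    · have h1 : ∀ c ∈ T, lo ≤ c.1 → c.1 + c.2 + 1 ≠ v :=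
        fun c hc hcl hcd => hS ⟨c, hc, hcl, hcd⟩
      by_cases h0 : (v, 0) ∈ T
      · by_cases h01 : (v, 1) ∈ T
        · rcases ih (v + 1) (v + 1) (Nat.le_refl _) (by omega) with ⟨T', hT'⟩ | hf
          · exact Or.inl ⟨T', SlideAux.s1c lo v T' h1 h0 hlv h01 hT'⟩
          · exact Or.inr (FailAux.f1c lo v h1 h0 hlv h01 hf)
        · exact Or.inr (FailAux.f1 lo v h1 h0 hlv h01)
      · refine Or.inl ⟨_, SlideAux.s1a lo v h1 ?_⟩
        intro c hc hcl hsum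
        rcases Nat.eq_zero_or_pos c.2 with hz | hpos
        · apply h0
          have : c = (v, 0) := by
            have : c = (c.1, c.2) := by rw [Prod.mk.eta]
            rw [this, hz]
            have : c.1 = v := by omega
            rw [this]
          rwa [this] at hc
        · obtain ⟨k, hk⟩ : ∃ k, c.2 = k + 1 := ⟨c.2 - 1, by omega⟩
          have hck : (c.1, k) ∈ T := (hT c hc).2 k (by omega)
          exact h1 (c.1, k) hck hcl (by omega)

private lemma slide_total {T : Finset Cell} (hT : IsTowerDiagram T) (lo v : ℕ) (hlv : lo ≤ v) :
    (∃ T', SlideAux T lo v T') ∨ FailAux T lo v :=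
  slide_total_aux hT ((T.sup fun c => c.1 + c.2) + 2) lo v hlv (by omega)

/-- Invariant for transferring the `α`-slide across the cell added by the
`β`-slide (where `β = b₀ + 2`): either the run has passed strictly to the right
of column `x`, or it is still at values `≤ x + y - 2` and carries the chain of
its past recursion columns. -/
private def Inv1 (T : Finset Cell) (x y b₀ lo v : ℕ) : Prop :=
  x < lo ∨ (v + 2 ≤ x + y ∧ ∃ q : ℕ → ℕ,
    (∀ w, b₀ ≤ w → w + 1 ≤ v →
      (∃ j, q w + j = w ∧ (q w, j) ∈ T ∧ (q w, j + 1) ∈ T) ∧ q w < lo) ∧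
    (∀ w, b₀ ≤ w → w + 2 ≤ v → q w < q (w + 1)))

private lemma inv1_safe {T : Finset Cell} {x y b₀ lo v : ℕ} (h : Inv1 T x y b₀ lo v) :
    x < lo ∨ v + 2 ≤ x + y :=
  h.elim Or.inl fun h' => Or.inr h'.1

/-- The invariant is preserved by a recursion step blocked at column `p`. -/
private lemma inv1_step {T : Finset Cell} {x y b₀ lo v p jp : ℕ} (hxy : (x, y) ∉ T)
    (hB : SlideAux T 0 (b₀ + 2) (insert (x, y) T))
    (hlv : lo ≤ v) (hlp : lo ≤ p) (hdiag : p + jp = v)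
    (hc1 : (p, jp) ∈ T) (hc2 : (p, jp + 1) ∈ T)
    (hinv : Inv1 T x y b₀ lo v) : Inv1 T x y b₀ (p + 1) (v + 1) := by
  rcases hinv with hxl | ⟨hs, q, hq1, hq2⟩
  · exact Or.inl (by omega)
  · by_cases hcross : v + 2 = x + y
    · -- the run enters the danger zone: apply the master lemma
      have h6 := slide_master hB hxy rfl (Function.update q v p) b₀ v rfl
        (by omega)
        (by
          intro w hw1 hw2
          by_cases hwv : w = v
          · subst hwv
            rw [Function.update_self]
            exact ⟨jp, hdiag, hc1, hc2⟩
          · rw [Function.update_of_ne hwv]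
            exact (hq1 w hw1 (by omega)).1)
        (by
          intro w hw1 hw2
          by_cases hwv : w + 1 = v
          · have hne : ¬ w = v := by omega
            rw [Function.update_of_ne hne, hwv, Function.update_self]
            have := (hq1 w hw1 (by omega)).2
            omega
          · rw [Function.update_of_ne (show w ≠ v by omega),
              Function.update_of_ne (show w + 1 ≠ v by omega)]
            exact hq2 w hw1 (by omega))
        (Nat.zero_le _)
      rw [Function.update_self] at h6
      exact Or.inl (by omega)
    · refine Or.inr ⟨by omega, Function.update q v p, ?_, ?_⟩
      · intro w hw1 hw2
        by_cases hwv : w = v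
        · subst hwv
          rw [Function.update_self]
          exact ⟨⟨jp, hdiag, hc1, hc2⟩, by omega⟩
        · rw [Function.update_of_ne hwv]
          obtain ⟨hc, hb⟩ := hq1 w hw1 (by omega)
          exact ⟨hc, by omega⟩
      · intro w hw1 hw2
        by_cases hwv : w + 1 = v
        · have hne : ¬ w = v := by omega
          rw [Function.update_of_ne hne, hwv, Function.update_self]
          have := (hq1 w hw1 (by omega)).2
          omega
        · rw [Function.update_of_ne (show w ≠ v by omega),
            Function.update_of_ne (show w + 1 ≠ v by omega)]
          exact hq2 w hw1 (by omega)

private lemma transfer1_slide {T : Finset Cell} {x y b₀ : ℕ} (hxy : (x, y) ∉ T)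
    (hB : SlideAux T 0 (b₀ + 2) (insert (x, y) T)) :
    ∀ {lo v : ℕ} {T₂ : Finset Cell}, SlideAux T lo v T₂ → lo ≤ v → Inv1 T x y b₀ lo v →
      SlideAux (insert (x, y) T) lo v (insert (x, y) T₂) := by
  intro lo v T₂ h
  induction h with
  | s1a lo v h1 h2 =>
    intro hlv hinv
    have hsafe := inv1_safe hinv
    rw [Finset.insert_comm]
    refine SlideAux.s1a lo v ?_ ?_
    · intro d hd hdlo
      rcases Finset.mem_insert.mp hd with rfl | hdT
      · have hdlo' : lo ≤ x := hdlo
        show x + y + 1 ≠ v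
        omega
      · exact h1 d hdT hdlo
    · intro d hd hdlo
      rcases Finset.mem_insert.mp hd with rfl | hdT
      · have hdlo' : lo ≤ x := hdlo
        show x + y ≠ v
        omega
      · exact h2 d hdT hdlo
  | s1c lo v T' h1 h2 h2' h3 hrec ih =>
    intro hlv hinv
    have hsafe := inv1_safe hinv
    refine SlideAux.s1c lo v _ ?_ (Finset.mem_insert_of_mem h2) h2'
      (Finset.mem_insert_of_mem h3)
      (ih (Nat.le_refl _) (inv1_step hxy hB hlv h2' (Nat.add_zero v) h2 h3 hinv))
    intro d hd hdlo
    rcases Finset.mem_insert.mp hd with rfl | hdT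
    · have hdlo' : lo ≤ x := hdlo
      show x + y + 1 ≠ v
      omega
    · exact h1 d hdT hdlo
  | s2a lo v i j hmem hlo hdiag hmin htop =>
    intro hlv hinv
    have hsafe := inv1_safe hinv
    rw [Finset.insert_comm]
    refine SlideAux.s2a lo v i j (Finset.mem_insert_of_mem hmem) hlo hdiag ?_ ?_
    · intro d hd hdlo hdsum
      rcases Finset.mem_insert.mp hd with rfl | hdT
      · have hdlo' : lo ≤ x := hdlo
        have hdsum' : x + y + 1 = v := hdsum
        show i ≤ x
        omega
      · exact hmin d hdT hdlo hdsum
    · intro hc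
      rcases Finset.mem_insert.mp hc with heq | hT
      · rw [Prod.mk.injEq] at heq
        omega
      · exact htop hT
  | s2c lo v i j T' hmem hlo hdiag hmin h1 h2 hrec ih =>
    intro hlv hinv
    have hsafe := inv1_safe hinv
    refine SlideAux.s2c lo v i j _ (Finset.mem_insert_of_mem hmem) hlo hdiag ?_
      (Finset.mem_insert_of_mem h1) (Finset.mem_insert_of_mem h2)
      (ih (by omega) (inv1_step hxy hB hlv hlo (by omega : i + (j + 1) = v) h1 h2 hinv))
    intro d hd hdlo hdsum
    rcases Finset.mem_insert.mp hd with rfl | hdT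
    · have hdlo' : lo ≤ x := hdlo
      have hdsum' : x + y + 1 = v := hdsum
      show i ≤ x
      omega
    · exact hmin d hdT hdlo hdsum

private lemma transfer1_fail {T : Finset Cell} {x y b₀ : ℕ} (hxy : (x, y) ∉ T)
    (hB : SlideAux T 0 (b₀ + 2) (insert (x, y) T)) :
    ∀ {lo v : ℕ}, FailAux T lo v → lo ≤ v → Inv1 T x y b₀ lo v →
      FailAux (insert (x, y) T) lo v := by
  intro lo v h
  induction h with
  | f1 lo v h1 h2 h2' h3 =>
    intro hlv hinv
    have hsafe := inv1_safe hinv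
    refine FailAux.f1 lo v ?_ (Finset.mem_insert_of_mem h2) h2' ?_
    · intro d hd hdlo
      rcases Finset.mem_insert.mp hd with rfl | hdT
      · have hdlo' : lo ≤ x := hdlo
        show x + y + 1 ≠ v
        omega
      · exact h1 d hdT hdlo
    · intro hc
      rcases Finset.mem_insert.mp hc with heq | hT
      · rw [Prod.mk.injEq] at heq
        omega
      · exact h3 hT
  | f1c lo v h1 h2 h2' h3 hrec ih =>
    intro hlv hinv
    have hsafe := inv1_safe hinv
    refine FailAux.f1c lo v ?_ (Finset.mem_insert_of_mem h2) h2'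
      (Finset.mem_insert_of_mem h3)
      (ih (Nat.le_refl _) (inv1_step hxy hB hlv h2' (Nat.add_zero v) h2 h3 hinv))
    intro d hd hdlo
    rcases Finset.mem_insert.mp hd with rfl | hdT
    · have hdlo' : lo ≤ x := hdlo
      show x + y + 1 ≠ v
      omega
    · exact h1 d hdT hdlo
  | f2 lo v i j hmem hlo hdiag hmin h1 h2 =>
    intro hlv hinv
    have hsafe := inv1_safe hinv
    refine FailAux.f2 lo v i j (Finset.mem_insert_of_mem hmem) hlo hdiag ?_
      (Finset.mem_insert_of_mem h1) ?_
    · intro d hd hdlo hdsum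
      rcases Finset.mem_insert.mp hd with rfl | hdT
      · have hdlo' : lo ≤ x := hdlo
        have hdsum' : x + y + 1 = v := hdsum
        show i ≤ x
        omega
      · exact hmin d hdT hdlo hdsum
    · intro hc
      rcases Finset.mem_insert.mp hc with heq | hT
      · rw [Prod.mk.injEq] at heq
        omega
      · exact h2 hT
  | f2c lo v i j hmem hlo hdiag hmin h1 h2 hrec ih =>
    intro hlv hinv
    have hsafe := inv1_safe hinv
    refine FailAux.f2c lo v i j (Finset.mem_insert_of_mem hmem) hlo hdiag ?_
      (Finset.mem_insert_of_mem h1) (Finset.mem_insert_of_mem h2)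
      (ih (by omega) (inv1_step hxy hB hlv hlo (by omega : i + (j + 1) = v) h1 h2 hinv))
    intro d hd hdlo hdsum
    rcases Finset.mem_insert.mp hd with rfl | hdT
    · have hdlo' : lo ≤ x := hdlo
      have hdsum' : x + y + 1 = v := hdsum
      show i ≤ x
      omega
    · exact hmin d hdT hdlo hdsum

/-- Invariant for transferring the `β`-slide across the cell `(x, y)` added by
the `α`-slide, whose recursion-column chain is `Q`. -/
private def Inv2 (x y : ℕ) (Q : ℕ → ℕ) (lo v : ℕ) : Prop :=
  x < lo ∨ x + y + 2 ≤ v ∨ (v ≤ x + y + 1 ∧ ∀ e, e + 2 = v → lo ≤ Q e)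

private lemma inv2_key {T : Finset Cell} {x y α₀ : ℕ} {Q : ℕ → ℕ}
    (hQ1 : ∀ w, α₀ ≤ w → w + 1 ≤ x + y →
      (∃ j, Q w + j = w ∧ (Q w, j) ∈ T ∧ (Q w, j + 1) ∈ T) ∧ Q w < x)
    {lo v i : ℕ} (hav : α₀ + 2 ≤ v)
    (hmin : ∀ c ∈ T, lo ≤ c.1 → c.1 + c.2 + 1 = v → i ≤ c.1)
    (hinv : Inv2 x y Q lo v) : x < lo ∨ x + y + 2 ≤ v ∨ i ≤ Q (v - 2) ∧ Q (v - 2) < x := by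
  rcases hinv with h | h | ⟨hv1, hQe⟩
  · exact Or.inl h
  · exact Or.inr (Or.inl h)
  · obtain ⟨e, he⟩ : ∃ e, e + 2 = v := ⟨v - 2, by omega⟩
    obtain ⟨⟨j', hj1, hj2, hj3⟩, hQx⟩ := hQ1 e (by omega) (by omega)
    have hpiv : i ≤ Q e := hmin (Q e, j' + 1) hj3 (hQe e he) (by omega)
    have hev : e = v - 2 := by omega
    subst hev
    exact Or.inr (Or.inr ⟨hpiv, hQx⟩)

private lemma inv2_nodiag {T : Finset Cell} {x y α₀ : ℕ} {Q : ℕ → ℕ}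
    (hQ1 : ∀ w, α₀ ≤ w → w + 1 ≤ x + y →
      (∃ j, Q w + j = w ∧ (Q w, j) ∈ T ∧ (Q w, j + 1) ∈ T) ∧ Q w < x)
    {lo v : ℕ} (hav : α₀ + 2 ≤ v)
    (h1 : ∀ c ∈ T, lo ≤ c.1 → c.1 + c.2 + 1 ≠ v)
    (hinv : Inv2 x y Q lo v) : x < lo ∨ x + y + 2 ≤ v := by
  rcases hinv with h | h | ⟨hv1, hQe⟩
  · exact Or.inl h
  · exact Or.inr h
  · obtain ⟨e, he⟩ : ∃ e, e + 2 = v := ⟨v - 2, by omega⟩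
    obtain ⟨⟨j', hj1, hj2, hj3⟩, hQx⟩ := hQ1 e (by omega) (by omega)
    exact absurd (by omega : Q e + (j' + 1) + 1 = v) (h1 (Q e, j' + 1) hj3 (hQe e he))

private lemma inv2_step {T : Finset Cell} {x y α₀ : ℕ} {Q : ℕ → ℕ}
    (hQ1 : ∀ w, α₀ ≤ w → w + 1 ≤ x + y →
      (∃ j, Q w + j = w ∧ (Q w, j) ∈ T ∧ (Q w, j + 1) ∈ T) ∧ Q w < x)
    (hQ2 : ∀ w, α₀ ≤ w → w + 2 ≤ x + y → Q w < Q (w + 1))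
    {lo v i : ℕ} (hav : α₀ + 2 ≤ v) (hlo : lo ≤ i)
    (hmin : ∀ c ∈ T, lo ≤ c.1 → c.1 + c.2 + 1 = v → i ≤ c.1)
    (hinv : Inv2 x y Q lo v) : Inv2 x y Q (i + 1) (v + 1) := by
  rcases hinv with h | h | ⟨hv1, hQe⟩
  · exact Or.inl (by omega)
  · exact Or.inr (Or.inl (by omega))
  · by_cases hend : x + y + 1 ≤ v
    · exact Or.inr (Or.inl (by omega))
    · obtain ⟨e, he⟩ : ∃ e, e + 2 = v := ⟨v - 2, by omega⟩
      obtain ⟨⟨j', hj1, hj2, hj3⟩, hQx⟩ := hQ1 e (by omega) (by omega)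
      have hpiv : i ≤ Q e := hmin (Q e, j' + 1) hj3 (hQe e he) (by omega)
      have hmono : Q e < Q (e + 1) := hQ2 e (by omega) (by omega)
      refine Or.inr (Or.inr ⟨by omega, fun e' he' => ?_⟩)
      have : e' = e + 1 := by omega
      rw [this]
      omega

private lemma transfer2_slide {T : Finset Cell} {x y α₀ : ℕ} (hxy : (x, y) ∉ T)
    {Q : ℕ → ℕ}
    (hQ1 : ∀ w, α₀ ≤ w → w + 1 ≤ x + y →
      (∃ j, Q w + j = w ∧ (Q w, j) ∈ T ∧ (Q w, j + 1) ∈ T) ∧ Q w < x)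
    (hQ2 : ∀ w, α₀ ≤ w → w + 2 ≤ x + y → Q w < Q (w + 1)) :
    ∀ {lo v : ℕ} {T₂ : Finset Cell}, SlideAux T lo v T₂ → lo ≤ v → α₀ + 2 ≤ v →
      Inv2 x y Q lo v → SlideAux (insert (x, y) T) lo v (insert (x, y) T₂) := by
  intro lo v T₂ h
  induction h with
  | s1a lo v h1 h2 =>
    intro hlv hav hinv
    have hsafe := inv2_nodiag hQ1 hav h1 hinv
    rw [Finset.insert_comm]
    refine SlideAux.s1a lo v ?_ ?_
    · intro d hd hdlo
      rcases Finset.mem_insert.mp hd with rfl | hdT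
      · have hdlo' : lo ≤ x := hdlo
        show x + y + 1 ≠ v
        omega
      · exact h1 d hdT hdlo
    · intro d hd hdlo
      rcases Finset.mem_insert.mp hd with rfl | hdT
      · have hdlo' : lo ≤ x := hdlo
        show x + y ≠ v
        omega
      · exact h2 d hdT hdlo
  | s1c lo v T' h1 h2 h2' h3 hrec ih =>
    intro hlv hav hinv
    have hsafe := inv2_nodiag hQ1 hav h1 hinv
    have hinv' : Inv2 x y Q (v + 1) (v + 1) := by
      rcases hsafe with h | h
      · exact Or.inl (by omega)
      · exact Or.inr (Or.inl (by omega))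
    refine SlideAux.s1c lo v _ ?_ (Finset.mem_insert_of_mem h2) h2'
      (Finset.mem_insert_of_mem h3) (ih (Nat.le_refl _) (by omega) hinv')
    intro d hd hdlo
    rcases Finset.mem_insert.mp hd with rfl | hdT
    · have hdlo' : lo ≤ x := hdlo
      show x + y + 1 ≠ v
      omega
    · exact h1 d hdT hdlo
  | s2a lo v i j hmem hlo hdiag hmin htop =>
    intro hlv hav hinv
    have hkey := inv2_key hQ1 hav hmin hinv
    rw [Finset.insert_comm]
    refine SlideAux.s2a lo v i j (Finset.mem_insert_of_mem hmem) hlo hdiag ?_ ?_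
    · intro d hd hdlo hdsum
      rcases Finset.mem_insert.mp hd with rfl | hdT
      · have h5 : lo ≤ x := hdlo
        have h6 : x + y + 1 = v := hdsum
        show i ≤ x
        omega
      · exact hmin d hdT hdlo hdsum
    · intro hc
      rcases Finset.mem_insert.mp hc with heq | hT
      · rw [Prod.mk.injEq] at heq
        omega
      · exact htop hT
  | s2c lo v i j T' hmem hlo hdiag hmin h1 h2 hrec ih =>
    intro hlv hav hinv
    have hkey := inv2_key hQ1 hav hmin hinv
    refine SlideAux.s2c lo v i j _ (Finset.mem_insert_of_mem hmem) hlo hdiag ?_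
      (Finset.mem_insert_of_mem h1) (Finset.mem_insert_of_mem h2)
      (ih (by omega) (by omega) (inv2_step hQ1 hQ2 hav hlo hmin hinv))
    intro d hd hdlo hdsum
    rcases Finset.mem_insert.mp hd with rfl | hdT
    · have h5 : lo ≤ x := hdlo
      have h6 : x + y + 1 = v := hdsum
      show i ≤ x
      omega
    · exact hmin d hdT hdlo hdsum

private lemma transfer2_fail {T : Finset Cell} {x y α₀ : ℕ} (hxy : (x, y) ∉ T)
    {Q : ℕ → ℕ}
    (hQ1 : ∀ w, α₀ ≤ w → w + 1 ≤ x + y →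
      (∃ j, Q w + j = w ∧ (Q w, j) ∈ T ∧ (Q w, j + 1) ∈ T) ∧ Q w < x)
    (hQ2 : ∀ w, α₀ ≤ w → w + 2 ≤ x + y → Q w < Q (w + 1)) :
    ∀ {lo v : ℕ}, FailAux T lo v → lo ≤ v → α₀ + 2 ≤ v →
      Inv2 x y Q lo v → FailAux (insert (x, y) T) lo v := by
  intro lo v h
  induction h with
  | f1 lo v h1 h2 h2' h3 =>
    intro hlv hav hinv
    have hsafe := inv2_nodiag hQ1 hav h1 hinv
    refine FailAux.f1 lo v ?_ (Finset.mem_insert_of_mem h2) h2' ?_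
    · intro d hd hdlo
      rcases Finset.mem_insert.mp hd with rfl | hdT
      · have hdlo' : lo ≤ x := hdlo
        show x + y + 1 ≠ v
        omega
      · exact h1 d hdT hdlo
    · intro hc
      rcases Finset.mem_insert.mp hc with heq | hT
      · rw [Prod.mk.injEq] at heq
        omega
      · exact h3 hT
  | f1c lo v h1 h2 h2' h3 hrec ih =>
    intro hlv hav hinv
    have hsafe := inv2_nodiag hQ1 hav h1 hinv
    have hinv' : Inv2 x y Q (v + 1) (v + 1) := by
      rcases hsafe with h | h
      · exact Or.inl (by omega)
      · exact Or.inr (Or.inl (by omega))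
    refine FailAux.f1c lo v ?_ (Finset.mem_insert_of_mem h2) h2'
      (Finset.mem_insert_of_mem h3) (ih (Nat.le_refl _) (by omega) hinv')
    intro d hd hdlo
    rcases Finset.mem_insert.mp hd with rfl | hdT
    · have hdlo' : lo ≤ x := hdlo
      show x + y + 1 ≠ v
      omega
    · exact h1 d hdT hdlo
  | f2 lo v i j hmem hlo hdiag hmin h1 h2 =>
    intro hlv hav hinv
    have hkey := inv2_key hQ1 hav hmin hinv
    refine FailAux.f2 lo v i j (Finset.mem_insert_of_mem hmem) hlo hdiag ?_
      (Finset.mem_insert_of_mem h1) ?_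
    · intro d hd hdlo hdsum
      rcases Finset.mem_insert.mp hd with rfl | hdT
      · have h5 : lo ≤ x := hdlo
        have h6 : x + y + 1 = v := hdsum
        show i ≤ x
        omega
      · exact hmin d hdT hdlo hdsum
    · intro hc
      rcases Finset.mem_insert.mp hc with heq | hT
      · rw [Prod.mk.injEq] at heq
        omega
      · exact h2 hT
  | f2c lo v i j hmem hlo hdiag hmin h1 h2 hrec ih =>
    intro hlv hav hinv
    have hkey := inv2_key hQ1 hav hmin hinv
    refine FailAux.f2c lo v i j (Finset.mem_insert_of_mem hmem) hlo hdiag ?_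
      (Finset.mem_insert_of_mem h1) (Finset.mem_insert_of_mem h2)
      (ih (by omega) (by omega) (inv2_step hQ1 hQ2 hav hlo hmin hinv))
    intro d hd hdlo hdsum
    rcases Finset.mem_insert.mp hd with rfl | hdT
    · have h5 : lo ≤ x := hdlo
      have h6 : x + y + 1 = v := hdsum
      show i ≤ x
      omega
    · exact hmin d hdT hdlo hdsum

private lemma main_far {T : Finset Cell} (hT : IsTowerDiagram T) {α β : ℕ}
    (hfar : α + 2 ≤ β) :
    (∃ U : Finset Cell,
        (∃ V, Slides T β V ∧ Slides V α U) ∧ (∃ W, Slides T α W ∧ Slides W β U)) ∨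
      ((¬ ∃ U V, Slides T β V ∧ Slides V α U) ∧
        (¬ ∃ U W, Slides T α W ∧ Slides W β U)) := by
  have hb2 : (β - 2) + 2 = β := by omega
  rcases slide_total hT 0 α (Nat.zero_le _) with ⟨T₁, hA⟩ | hAf
  · obtain ⟨x₁, y₁, hc₁, hT₁, hcol₁, hsum₁⟩ := slide_added hA (Nat.zero_le _)
    subst hT₁
    obtain ⟨Q, hQ1, hQ2⟩ := slide_extract hA hc₁ rfl
    have hQ1' : ∀ w, α ≤ w → w + 1 ≤ x₁ + y₁ →
        (∃ j, Q w + j = w ∧ (Q w, j) ∈ T ∧ (Q w, j + 1) ∈ T) ∧ Q w < x₁ :=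
      fun w h1 h2 => ⟨(hQ1 w h1 h2).1, (hQ1 w h1 h2).2.2⟩
    have hinv2 : Inv2 x₁ y₁ Q 0 β := by
      by_cases hc : x₁ + y₁ + 2 ≤ β
      · exact Or.inr (Or.inl hc)
      · exact Or.inr (Or.inr ⟨by omega, fun e he => Nat.zero_le _⟩)
    rcases slide_total hT 0 β (Nat.zero_le _) with ⟨T₂, hB⟩ | hBf
    · obtain ⟨x₂, y₂, hc₂, hT₂, hcol₂, hsum₂⟩ := slide_added hB (Nat.zero_le _)
      subst hT₂
      have hB' : SlideAux T 0 ((β - 2) + 2) (insert (x₂, y₂) T) := by rw [hb2]; exact hB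
      have hinv1 : Inv1 T x₂ y₂ (β - 2) 0 α :=
        Or.inr ⟨by omega, fun _ => 0,
          fun w hw1 hw2 => absurd hw2 (by omega),
          fun w hw1 hw2 => absurd hw2 (by omega)⟩
      have hα' : SlideAux (insert (x₂, y₂) T) 0 α (insert (x₂, y₂) (insert (x₁, y₁) T)) :=
        transfer1_slide hc₂ hB' hA (Nat.zero_le _) hinv1
      have hβ' : SlideAux (insert (x₁, y₁) T) 0 β (insert (x₁, y₁) (insert (x₂, y₂) T)) :=
        transfer2_slide hc₁ hQ1' hQ2 hB (Nat.zero_le _) (by omega) hinv2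
      left
      refine ⟨insert (x₁, y₁) (insert (x₂, y₂) T),
        ⟨insert (x₂, y₂) T, hB, ?_⟩, ⟨insert (x₁, y₁) T, hA, hβ'⟩⟩
      rw [Finset.insert_comm]
      exact hα'
    · have hfail : FailAux (insert (x₁, y₁) T) 0 β :=
        transfer2_fail hc₁ hQ1' hQ2 hBf (Nat.zero_le _) (by omega) hinv2
      right
      refine ⟨?_, ?_⟩
      · rintro ⟨U, V, hV, -⟩
        exact fail_not_slide hBf hV
      · rintro ⟨U, W, hW, hWβ⟩
        have hWe : W = insert (x₁, y₁) T := slide_det hW hA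
        subst hWe
        exact fail_not_slide hfail hWβ
  · rcases slide_total hT 0 β (Nat.zero_le _) with ⟨T₂, hB⟩ | hBf
    · obtain ⟨x₂, y₂, hc₂, hT₂, hcol₂, hsum₂⟩ := slide_added hB (Nat.zero_le _)
      subst hT₂
      have hB' : SlideAux T 0 ((β - 2) + 2) (insert (x₂, y₂) T) := by rw [hb2]; exact hB
      have hinv1 : Inv1 T x₂ y₂ (β - 2) 0 α :=
        Or.inr ⟨by omega, fun _ => 0,
          fun w hw1 hw2 => absurd hw2 (by omega),
          fun w hw1 hw2 => absurd hw2 (by omega)⟩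
      have hfail : FailAux (insert (x₂, y₂) T) 0 α :=
        transfer1_fail hc₂ hB' hAf (Nat.zero_le _) hinv1
      right
      refine ⟨?_, ?_⟩
      · rintro ⟨U, V, hV, hVα⟩
        have hVe : V = insert (x₂, y₂) T := slide_det hV hB
        subst hVe
        exact fail_not_slide hfail hVα
      · rintro ⟨U, W, hW, -⟩
        exact fail_not_slide hAf hW
    · right
      exact ⟨fun ⟨U, V, hV, _⟩ => fail_not_slide hBf hV,
        fun ⟨U, W, hW, _⟩ => fail_not_slide hAf hW⟩

end SlidesFarCommute
/-- For `|β - α| ≥ 2`, either both iterated slides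
`α ↘ (β ↘ T)` and `β ↘ (α ↘ T)` are defined and equal, or both terminate
without result. -/
theorem slides_far_commute
    (T : Finset Cell) (hT : IsTowerDiagram T)
    (α β : ℕ) (hα : 1 ≤ α) (hβ : 1 ≤ β)
    (hfar : α + 2 ≤ β ∨ β + 2 ≤ α) :
    (∃ U : Finset Cell,
        (∃ V, Slides T β V ∧ Slides V α U) ∧ (∃ W, Slides T α W ∧ Slides W β U)) ∨
      ((¬ ∃ U V, Slides T β V ∧ Slides V α U) ∧
        (¬ ∃ U W, Slides T α W ∧ Slides W β U)) := by
  rcases hfar with h | h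
  · exact main_far hT h
  · rcases main_far hT h with ⟨U, h1, h2⟩ | ⟨h1, h2⟩
    · exact Or.inl ⟨U, h2, h1⟩
    · exact Or.inr ⟨h2, h1⟩
end

section
/- Let T be a tower diagram and let α be a positive integer. Then either both iterated slides α^↘((α+1)^↘(α^↘T)) and (α+1)^↘(α^↘((α+1)^↘T)) are defined and α^↘((α+1)^↘(α^↘T)) = (α+1)^↘(α^↘((α+1)^↘T)), or both iterated slides terminate without result. -/
namespace SBraid

def scan : List ℕ → ℕ → Option (List ℕ)
  | [], d => some (List.replicate d 0 ++ [1])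
  | x :: t, d =>
    if x = d then some ((d+1) :: t)
    else if x = d + 1 then none
    else if x < d then (scan t (d-1)).map (x :: ·)
    else (scan t d).map (x :: ·)

@[simp] lemma scan_nil (d : ℕ) : scan [] d = some (List.replicate d 0 ++ [1]) := rfl

lemma scan_cons_eq {x d : ℕ} (h : x = d) (t : List ℕ) :
    scan (x :: t) d = some ((d+1) :: t) := by simp [scan, h]

lemma scan_cons_fail {x d : ℕ} (h : x = d + 1) (t : List ℕ) :
    scan (x :: t) d = none := by
  have : x ≠ d := by omega
  simp [scan, h, this]

lemma scan_cons_lt {x d : ℕ} (h : x < d) (t : List ℕ) :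
    scan (x :: t) d = (scan t (d-1)).map (x :: ·) := by
  have h1 : x ≠ d := by omega
  have h2 : x ≠ d + 1 := by omega
  simp [scan, h1, h2, h]

lemma scan_cons_ge {x d : ℕ} (h : d + 2 ≤ x) (t : List ℕ) :
    scan (x :: t) d = (scan t d).map (x :: ·) := by
  have h1 : x ≠ d := by omega
  have h2 : x ≠ d + 1 := by omega
  have h3 : ¬ x < d := by omega
  simp [scan, h1, h2, h3]

lemma map_bind' {α β γ : Type} (o : Option α) (f : α → β) (g : β → Option γ) :
    (o.map f).bind g = o.bind (fun a => g (f a)) := by cases o <;> rfl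

lemma bind_map' {α β γ : Type} (o : Option α) (f : α → Option β) (g : β → γ) :
    o.bind (fun a => (f a).map g) = (o.bind f).map g := by cases o <;> rfl

lemma scan_zeros (k : ℕ) (t : List ℕ) (d : ℕ) (h : k ≤ d) :
    scan (List.replicate k 0 ++ t) d
      = (scan t (d - k)).map (List.replicate k 0 ++ ·) := by
  induction k generalizing d with
  | zero => simp [Option.map_id']
  | succ k ih =>
    have hd : 0 < d := by omega
    rw [List.replicate_succ, List.cons_append, scan_cons_lt hd,
      ih (d-1) (by omega)]
    have : d - 1 - k = d - (k+1) := by omega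
    rw [this, Option.map_map]
    rfl

/-- The braid relation for scans. -/
theorem scan_braid (t : List ℕ) (d : ℕ) :
    (scan t d).bind (fun u => (scan u (d+1)).bind (fun v => scan v d))
      = (scan t (d+1)).bind (fun u => (scan u d).bind (fun v => scan v (d+1))) := by
  induction t generalizing d with
  | nil =>
    rw [scan_nil, scan_nil]
    have e1 : scan (List.replicate d 0 ++ [1]) (d+1)
        = some (List.replicate d 0 ++ [2]) := by
      rw [scan_zeros d [1] (d+1) (by omega)]
      have h : d + 1 - d = 1 := by omega
      rw [h, scan_cons_eq rfl]; rfl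
    have e2 : scan (List.replicate d 0 ++ [2]) d
        = some (List.replicate d 0 ++ [2, 1]) := by
      rw [scan_zeros d [2] d (by omega)]
      have h : d - d = 0 := by omega
      rw [h, scan_cons_ge (by omega)]
      simp [scan]
    have e3 : List.replicate (d+1) 0 ++ [1] = List.replicate d 0 ++ [0, 1] := by
      rw [List.replicate_succ']; simp
    have e4 : scan (List.replicate d 0 ++ [0, 1]) d
        = some (List.replicate d 0 ++ [1, 1]) := by
      rw [scan_zeros d [0,1] d (by omega)]
      have h : d - d = 0 := by omega
      rw [h, scan_cons_eq rfl]; rfl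
    have e5 : scan (List.replicate d 0 ++ [1, 1]) (d+1)
        = some (List.replicate d 0 ++ [2, 1]) := by
      rw [scan_zeros d [1,1] (d+1) (by omega)]
      have h : d + 1 - d = 1 := by omega
      rw [h, scan_cons_eq rfl]; rfl
    rw [e3]
    simp only [Option.bind_some, e1, e2, e4, e5]
  | cons x t ih =>
    rcases Nat.lt_trichotomy x d with hx | hx | hx
    · -- x < d : all three heads decrement
      obtain ⟨d', rfl⟩ : ∃ d', d = d' + 1 := ⟨d - 1, by omega⟩
      have l1 : ∀ s, scan (x :: s) (d'+1) = (scan s d').map (x :: ·) := by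
        intro s; rw [scan_cons_lt (by omega)]; rfl
      have l2 : ∀ s, scan (x :: s) (d'+2) = (scan s (d'+1)).map (x :: ·) := by
        intro s; rw [scan_cons_lt (by omega)]; rfl
      show (scan (x :: t) (d'+1)).bind _ = (scan (x :: t) (d'+2)).bind _
      rw [l1, l2]
      simp only [map_bind', l1, l2, bind_map']
      exact congrArg (Option.map _) (ih d')
    · -- x = d
      subst hx
      rw [scan_cons_eq rfl, scan_cons_lt (by omega)]
      simp only [Option.bind_some, Nat.add_sub_cancel]
      rw [scan_cons_eq rfl]
      simp only [Option.bind_some]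
      rw [scan_cons_ge (by omega)]
      simp only [map_bind']
      have l3 : ∀ u, (scan (x :: u) x).bind (fun v => scan v (x+1))
          = Option.map (fun v => (x+2) :: v) (some u) := by
        intro u
        rw [scan_cons_eq rfl]
        simp only [Option.bind_some]
        rw [scan_cons_eq rfl]
        rfl
      simp only [l3]
      cases scan t x <;> rfl
    · rcases Nat.lt_trichotomy x (d+2) with hx2 | hx2 | hx2
      · -- x = d + 1
        have hx1 : x = d + 1 := by omega
        subst hx1
        rw [scan_cons_fail rfl, scan_cons_eq rfl]
        simp only [Option.bind_none, Option.bind_some]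
        rw [scan_cons_ge (by omega)]
        simp only [map_bind']
        have l3 : ∀ v, scan ((d + 1 + 1) :: v) (d+1) = none := by
          intro v; exact scan_cons_fail rfl v
        simp only [l3]
        cases scan t d <;> rfl
      · -- x = d + 2
        subst hx2
        rw [scan_cons_ge (by omega), scan_cons_fail rfl]
        simp only [map_bind', Option.bind_none]
        have l3 : ∀ u, scan ((d + 2) :: u) (d+1) = none := fun u =>
          scan_cons_fail rfl u
        simp only [l3]
        cases scan t d <;> rfl
      · -- x ≥ d + 3
        have l1 : ∀ s, scan (x :: s) d = (scan s d).map (x :: ·) :=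
          scan_cons_ge (by omega)
        have l2 : ∀ s, scan (x :: s) (d+1) = (scan s (d+1)).map (x :: ·) :=
          scan_cons_ge (by omega)
        rw [l1, l2]
        simp only [map_bind', l1, l2, bind_map']
        exact congrArg (Option.map _) (ih d)

@[simp] lemma getD_nil (i : ℕ) : ([] : List ℕ).getD i 0 = 0 := by simp

@[simp] lemma getD_cons_zero (x : ℕ) (l : List ℕ) : (x :: l).getD 0 0 = x := rfl

@[simp] lemma getD_cons_succ (x : ℕ) (l : List ℕ) (i : ℕ) :
    (x :: l).getD (i+1) 0 = l.getD i 0 := rfl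

lemma getD_drop (l : List ℕ) (k i : ℕ) : (l.drop k).getD i 0 = l.getD (k + i) 0 := by
  simp [List.getD_eq_getElem?_getD, List.getElem?_drop]

lemma getD_getElem (l : List ℕ) (k : ℕ) (h : k < l.length) : l.getD k 0 = l[k] := by
  simp [List.getD_eq_getElem?_getD, List.getElem?_eq_getElem h]

lemma drop_cons (l : List ℕ) (k : ℕ) (h : k < l.length) :
    l.drop k = l.getD k 0 :: l.drop (k+1) := by
  rw [List.drop_eq_getElem_cons h]
  congr 1
  exact (getD_getElem l k h).symm

lemma getD_take (l : List ℕ) (k i : ℕ) (h : i < k) :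
    (l.take k).getD i 0 = l.getD i 0 := by
  simp [List.getD_eq_getElem?_getD, List.getElem?_take, h]

lemma getD_replicate (n i : ℕ) : (List.replicate n (0:ℕ)).getD i 0 = 0 := by
  induction n generalizing i with
  | zero => simp
  | succ n ih =>
    cases i with
    | zero => simp [List.replicate_succ]
    | succ i => simpa [List.replicate_succ] using ih i

lemma getD_glue (t : List ℕ) (k : ℕ) (hk : k ≤ t.length) (m : List ℕ) (i : ℕ) :
    (t.take k ++ m).getD i 0 = if i < k then t.getD i 0 else m.getD (i - k) 0 := by
  have hlen : (t.take k).length = k := by simp [hk]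
  split
  · next h =>
    rw [List.getD_append _ _ _ _ (by omega), getD_take _ _ _ h]
  · next h =>
    rw [List.getD_append_right _ _ _ _ (by omega), hlen]

lemma scan_skip (k : ℕ) (t : List ℕ) (d : ℕ) (hk : k ≤ d) (hlen : k ≤ t.length)
    (hsmall : ∀ m, m < k → t.getD m 0 + m < d) :
    scan t d = (scan (t.drop k) (d - k)).map (t.take k ++ ·) := by
  induction k generalizing t d with
  | zero => simp [Option.map_id']
  | succ k ih =>
    cases t with
    | nil => simp at hlen
    | cons y t' =>
      have hy : y < d := by
        have := hsmall 0 (by omega)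
        have e : (y :: t').getD 0 0 = y := rfl
        omega
      rw [scan_cons_lt hy]
      rw [ih t' (d-1) (by omega) (by simpa using hlen)
        (fun m hm => by
          have := hsmall (m+1) (by omega)
          have e : (y :: t').getD (m+1) 0 = t'.getD m 0 := rfl
          omega)]
      have h1 : d - 1 - k = d - (k+1) := by omega
      rw [h1, Option.map_map]
      rfl

lemma scan_over (t : List ℕ) (d : ℕ) (hlen : t.length ≤ d)
    (hsmall : ∀ m, m < t.length → t.getD m 0 + m < d) :
    scan t d = some (t ++ (List.replicate (d - t.length) 0 ++ [1])) := by
  rw [scan_skip t.length t d hlen le_rfl hsmall]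
  simp [scan]

lemma getD_of_le (l : List ℕ) {i : ℕ} (h : l.length ≤ i) : l.getD i 0 = 0 := by
  simp [List.getD_eq_getElem?_getD, List.getElem?_eq_none h]

lemma lt_length_of_getD_pos (l : List ℕ) {i : ℕ} (h : 0 < l.getD i 0) :
    i < l.length := by
  by_contra hc
  rw [getD_of_le l (by omega)] at h
  omega

lemma small_of_nodiag {T : Finset Cell} {t : List ℕ} {lo α : ℕ}
    (ht : ∀ i j : ℕ, ((lo + i, j) ∈ T ↔ j < t.getD i 0))
    (k : ℕ) (hk : lo + k ≤ α)
    (h : ∀ c ∈ T, lo ≤ c.1 → c.1 < lo + k → c.1 + c.2 + 1 ≠ α) :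
    ∀ m, m < k → t.getD m 0 + m < α - lo := by
  intro m hm
  by_contra hcon
  push_neg at hcon
  have hj : α - lo - m - 1 < t.getD m 0 := by omega
  have hmem : (lo + m, α - lo - m - 1) ∈ T := (ht m _).mpr hj
  exact h _ hmem (by omega) (by omega) (by omega)

lemma getD_glue_cons (t : List ℕ) (k : ℕ) (hk : k ≤ t.length) (y : ℕ) (m₂ : List ℕ)
    (i : ℕ) :
    (t.take k ++ y :: m₂).getD i 0
      = if i < k then t.getD i 0 else if i = k then y else m₂.getD (i - k - 1) 0 := by
  rw [getD_glue t k hk]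
  rcases lt_trichotomy i k with h | rfl | h
  · rw [if_pos h, if_pos h]
  · rw [if_neg (by omega), if_neg (by omega), if_pos rfl]
    have h0 : i - i = 0 := by omega
    rw [h0]; rfl
  · rw [if_neg (by omega), if_neg (by omega), if_neg (by omega)]
    have h4 : i - k = (i - k - 1) + 1 := by omega
    conv_lhs => rw [h4]
    rw [getD_cons_succ]

lemma repr_insert {T : Finset Cell} {lo : ℕ} {t : List ℕ}
    (ht : ∀ i j : ℕ, ((lo + i, j) ∈ T ↔ j < t.getD i 0))
    {k b : ℕ} (hb : t.getD k 0 = b) {m : List ℕ}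
    (hm : ∀ i, m.getD i 0 = if i = k then b + 1 else t.getD i 0) :
    ∀ i j : ℕ, ((lo + i, j) ∈ insert (lo + k, b) T ↔ j < m.getD i 0) := by
  intro i j
  rw [hm]
  rcases eq_or_ne i k with rfl | hne
  · rw [if_pos rfl]
    constructor
    · intro hmem'
      rcases Finset.mem_insert.mp hmem' with he | hj
      · have : j = b := congrArg Prod.snd he
        omega
      · have := (ht i j).mp hj
        omega
    · intro hj
      rcases Nat.lt_or_ge j b with hc | hc
      · exact Finset.mem_insert_of_mem ((ht i j).mpr (by omega))
      · have hjb : j = b := by omega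
        subst hjb
        exact Finset.mem_insert_self _ _
  · rw [if_neg hne]
    constructor
    · intro hmem'
      rcases Finset.mem_insert.mp hmem' with he | hj
      · have h1' : lo + i = lo + k := congrArg Prod.fst he
        omega
      · exact (ht i j).mp hj
    · intro hj
      exact Finset.mem_insert_of_mem ((ht i j).mpr hj)

lemma below_insert {T : Finset Cell} {lo a b : ℕ} (ha : lo ≤ a) :
    ∀ i j : ℕ, i < lo → ((i, j) ∈ insert (a, b) T ↔ (i, j) ∈ T) := by
  intro i j hi
  constructor
  · intro hm
    rcases Finset.mem_insert.mp hm with he | hj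
    · have : i = a := congrArg Prod.fst he
      omega
    · exact hj
  · exact Finset.mem_insert_of_mem

lemma repr_glue {T T' : Finset Cell} {lo k : ℕ} {t m₂ : List ℕ}
    (hk : k ≤ t.length)
    (ht : ∀ i j : ℕ, ((lo + i, j) ∈ T ↔ j < t.getD i 0))
    (hT'hi : ∀ i j : ℕ, ((lo + k + 1 + i, j) ∈ T' ↔ j < m₂.getD i 0))
    (hT'lo : ∀ i j : ℕ, i < lo + k + 1 → ((i, j) ∈ T' ↔ (i, j) ∈ T)) :
    ∀ i j : ℕ, ((lo + i, j) ∈ T' ↔ j < (t.take k ++ t.getD k 0 :: m₂).getD i 0) := by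
  intro i j
  rw [getD_glue_cons t k hk]
  rcases lt_trichotomy i k with h | rfl | h
  · rw [if_pos h]
    rw [hT'lo (lo + i) j (by omega)]
    exact ht i j
  · rw [if_neg (by omega), if_pos rfl]
    rw [hT'lo (lo + i) j (by omega)]
    exact ht i j
  · rw [if_neg (by omega), if_neg (by omega)]
    have h5 := hT'hi (i - k - 1) j
    rwa [show lo + k + 1 + (i - k - 1) = lo + i from by omega] at h5

lemma bridgeF {T : Finset Cell} {lo α : ℕ} {T' : Finset Cell}
    (h : SlideAux T lo α T') :
    ∀ t : List ℕ, lo ≤ α →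
    (∀ i j : ℕ, ((lo + i, j) ∈ T ↔ j < t.getD i 0)) →
    ∃ m, scan t (α - lo) = some m ∧
      (∀ i j : ℕ, ((lo + i, j) ∈ T' ↔ j < m.getD i 0)) ∧
      (∀ i j : ℕ, i < lo → ((i, j) ∈ T' ↔ (i, j) ∈ T)) := by
  induction h with
  | s1a lo α h1 h2 =>
    intro t hlo ht
    set d := α - lo with hd
    have hαd : α = lo + d := by omega
    have hsmall : ∀ m, m < d → t.getD m 0 + m < d :=
      small_of_nodiag ht d (by omega) (fun c hc hc1 _ hc2 => h1 c hc hc1 hc2)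
    have hz : t.getD d 0 = 0 := by
      by_contra h0
      have hpos : 0 < t.getD d 0 := by omega
      exact h2 _ ((ht d 0).mpr hpos) (by omega) (by omega)
    rcases le_or_gt t.length d with hlen | hlen
    · have hm := scan_over t d hlen (fun m hm => hsmall m (by omega))
      refine ⟨_, hm, ?_, ?_⟩
      · have hg : ∀ i, (t ++ (List.replicate (d - t.length) 0 ++ [1])).getD i 0
            = if i = d then 0 + 1 else t.getD i 0 := by
          intro i
          rcases lt_or_ge i t.length with h | h
          · rw [List.getD_append _ _ _ _ h, if_neg (by omega)]
          · rw [List.getD_append_right _ _ _ _ h]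
            rcases lt_trichotomy i d with h3 | h3 | h3
            · rw [List.getD_append _ _ _ _ (by simp only [List.length_replicate]; omega),
                getD_replicate, if_neg (by omega), getD_of_le t h]
            · subst h3
              rw [List.getD_append_right _ _ _ _
                (by simp only [List.length_replicate]; omega), if_pos rfl]
              simp only [List.length_replicate]
              rw [show d - t.length - (d - t.length) = 0 from by omega]
              rfl
            · rw [List.getD_append_right _ _ _ _
                (by simp only [List.length_replicate]; omega), if_neg (by omega),
                getD_of_le t h]
              simp only [List.length_replicate]
              rw [show i - t.length - (d - t.length) = (i - d - 1) + 1 from by omega,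
                getD_cons_succ]
              simp
        rw [hαd]
        exact repr_insert ht hz hg
      · rw [hαd]; exact below_insert (by omega)
    · have hstep := scan_skip d t d le_rfl (by omega) hsmall
      have hdd : d - d = 0 := by omega
      rw [drop_cons t d hlen, hz, hdd, scan_cons_eq rfl] at hstep
      refine ⟨_, by rw [hstep]; rfl, ?_, ?_⟩
      · have hg : ∀ i, (t.take d ++ (0 + 1) :: t.drop (d+1)).getD i 0
            = if i = d then 0 + 1 else t.getD i 0 := by
          intro i
          rw [getD_glue_cons t d (by omega)]
          rcases lt_trichotomy i d with h3 | h3 | h3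
          · rw [if_pos h3, if_neg (by omega)]
          · subst h3; rw [if_neg (by omega), if_pos rfl, if_pos rfl]
          · rw [if_neg (by omega), if_neg (by omega), if_neg (by omega), getD_drop]
            congr 1; omega
        rw [hαd]
        exact repr_insert ht hz hg
      · rw [hαd]; exact below_insert (by omega)
  | s1c lo α T' h1 h2 h2' h3 hrec ih =>
    intro t hlo ht
    set d := α - lo with hd
    have hαd : α = lo + d := by omega
    have hsmall : ∀ m, m < d → t.getD m 0 + m < d :=
      small_of_nodiag ht d (by omega) (fun c hc hc1 _ hc2 => h1 c hc hc1 hc2)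
    have hx : 2 ≤ t.getD d 0 := by
      have := (ht d 1).mp (by rw [← hαd]; exact h3)
      omega
    have hlen : d < t.length := lt_length_of_getD_pos t (by omega)
    have htshift : ∀ i j : ℕ, ((α + 1 + i, j) ∈ T ↔ j < (t.drop (d+1)).getD i 0) := by
      intro i j
      rw [getD_drop]
      have h5 := ht (d + 1 + i) j
      rwa [show lo + (d + 1 + i) = α + 1 + i from by omega] at h5
    rcases ih (t.drop (d+1)) le_rfl htshift with ⟨m₂, hm₂, hrepr, hlow⟩
    rw [show α + 1 - (α + 1) = 0 from by omega] at hm₂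
    have hstep := scan_skip d t d le_rfl (by omega) hsmall
    rw [drop_cons t d hlen, show d - d = 0 from by omega,
      scan_cons_ge (by omega), hm₂] at hstep
    refine ⟨_, by rw [hstep]; rfl, ?_, ?_⟩
    · exact repr_glue (by omega) ht
        (by rw [show lo + d + 1 = α + 1 from by omega]; exact hrepr)
        (by rw [show lo + d + 1 = α + 1 from by omega]; exact hlow)
    · intro i j hi
      exact hlow i j (by omega)
  | s2a lo α i j hmem hlo2 hdiag hmin htop =>
    intro t hlo ht
    set d := α - lo with hd
    set k := i - lo with hk2
    have hik : i = lo + k := by omega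
    have hdk : d - k = j + 1 := by omega
    have hkd : k ≤ d := by omega
    have hjb : j < t.getD k 0 := (ht k j).mp (by rw [← hik]; exact hmem)
    have hjt : t.getD k 0 ≤ j + 1 := by
      by_contra hc
      have h5 := (ht k (j+1)).mpr (by omega)
      rw [← hik] at h5
      exact htop h5
    have hgd : t.getD k 0 = j + 1 := by omega
    have hklen : k < t.length := lt_length_of_getD_pos t (by omega)
    have hsmall : ∀ m, m < k → t.getD m 0 + m < d :=
      small_of_nodiag ht k (by omega)
        (fun c hc hc1 hc2 hc3 => absurd (hmin c hc hc1 hc3) (by omega))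
    have hstep := scan_skip k t d hkd (by omega) hsmall
    rw [drop_cons t k hklen, hgd,
      scan_cons_eq (show j + 1 = d - k from by omega)] at hstep
    refine ⟨_, by rw [hstep]; rfl, ?_, ?_⟩
    · have hg : ∀ i', (t.take k ++ (d - k + 1) :: t.drop (k+1)).getD i' 0
          = if i' = k then (j + 1) + 1 else t.getD i' 0 := by
        intro i'
        rw [getD_glue_cons t k (by omega)]
        rcases lt_trichotomy i' k with h3 | h3 | h3
        · rw [if_pos h3, if_neg (by omega)]
        · subst h3; rw [if_neg (by omega), if_pos rfl, if_pos rfl]; omega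
        · rw [if_neg (by omega), if_neg (by omega), if_neg (by omega), getD_drop]
          congr 1; omega
      rw [hik]
      exact repr_insert ht hgd hg
    · rw [hik]; exact below_insert (by omega)
  | s2c lo α i j T' hmem hlo2 hdiag hmin h1 h2 hrec ih =>
    intro t hlo ht
    set d := α - lo with hd
    set k := i - lo with hk2
    have hik : i = lo + k := by omega
    have hdk : d - k = j + 1 := by omega
    have hkd : k ≤ d := by omega
    have hx : j + 3 ≤ t.getD k 0 := by
      have h5 := (ht k (j+2)).mp (by rw [← hik]; exact h2)
      omega
    have hklen : k < t.length := lt_length_of_getD_pos t (by omega)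
    have hsmall : ∀ m, m < k → t.getD m 0 + m < d :=
      small_of_nodiag ht k (by omega)
        (fun c hc hc1 hc2 hc3 => absurd (hmin c hc hc1 hc3) (by omega))
    have htshift : ∀ i' j' : ℕ, ((i + 1 + i', j') ∈ T ↔ j' < (t.drop (k+1)).getD i' 0) := by
      intro i' j'
      rw [getD_drop]
      have h5 := ht (k + 1 + i') j'
      rwa [show lo + (k + 1 + i') = i + 1 + i' from by omega] at h5
    rcases ih (t.drop (k+1)) (by omega) htshift with ⟨m₂, hm₂, hrepr, hlow⟩
    rw [show α + 1 - (i + 1) = d - k from by omega] at hm₂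
    have hstep := scan_skip k t d hkd (by omega) hsmall
    rw [drop_cons t k hklen, scan_cons_ge (by omega), hm₂] at hstep
    refine ⟨_, by rw [hstep]; rfl, ?_, ?_⟩
    · exact repr_glue (by omega) ht
        (by rw [show lo + k + 1 = i + 1 from by omega]; exact hrepr)
        (by rw [show lo + k + 1 = i + 1 from by omega]; exact hlow)
    · intro i' j' hi'
      exact hlow i' j' (by omega)

lemma min_of_small {T : Finset Cell} {t : List ℕ} {lo α k : ℕ}
    (ht : ∀ i j : ℕ, ((lo + i, j) ∈ T ↔ j < t.getD i 0))
    (hsmall : ∀ m, m < k → t.getD m 0 + m < α - lo) :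
    ∀ c ∈ T, lo ≤ c.1 → c.1 + c.2 + 1 = α → lo + k ≤ c.1 := by
  rintro ⟨a, b⟩ hc hc1 hc2
  simp only at hc1 hc2 ⊢
  by_contra hcon
  push_neg at hcon
  have hcell : b < t.getD (a - lo) 0 := by
    have h5 := ht (a - lo) b
    rw [show lo + (a - lo) = a from by omega] at h5
    exact h5.mp hc
  have := hsmall (a - lo) (by omega)
  omega

lemma nodiag_of_small {T : Finset Cell} {t : List ℕ} {lo α : ℕ}
    (ht : ∀ i j : ℕ, ((lo + i, j) ∈ T ↔ j < t.getD i 0))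
    (hlo : lo ≤ α)
    (hsmall : ∀ m, m < α - lo → t.getD m 0 + m < α - lo) :
    ∀ c ∈ T, lo ≤ c.1 → c.1 + c.2 + 1 ≠ α :=
  fun c hc hc1 hc2 =>
    absurd (min_of_small ht hsmall c hc hc1 hc2) (by omega)

lemma nosum_of_small {T : Finset Cell} {t : List ℕ} {lo α : ℕ}
    (ht : ∀ i j : ℕ, ((lo + i, j) ∈ T ↔ j < t.getD i 0))
    (hlo : lo ≤ α)
    (hsmall : ∀ m, m < α - lo → t.getD m 0 + m < α - lo)
    (hz : t.getD (α - lo) 0 = 0) :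
    ∀ c ∈ T, lo ≤ c.1 → c.1 + c.2 ≠ α := by
  rintro ⟨a, b⟩ hc hc1 hc2
  simp only at hc1 hc2
  have hcell : b < t.getD (a - lo) 0 := by
    have h5 := ht (a - lo) b
    rw [show lo + (a - lo) = a from by omega] at h5
    exact h5.mp hc
  rcases lt_trichotomy (a - lo) (α - lo) with h | h | h
  · have := hsmall _ h; omega
  · rw [h] at hcell; omega
  · omega

lemma bridgeB : ∀ μ : ℕ, ∀ T : Finset Cell, ∀ lo α : ℕ, ∀ t m : List ℕ,
    t.length + (α - lo) ≤ μ → lo ≤ α →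
    (∀ i j : ℕ, ((lo + i, j) ∈ T ↔ j < t.getD i 0)) →
    scan t (α - lo) = some m →
    ∃ T', SlideAux T lo α T' ∧
      (∀ i j : ℕ, ((lo + i, j) ∈ T' ↔ j < m.getD i 0)) ∧
      (∀ i j : ℕ, i < lo → ((i, j) ∈ T' ↔ (i, j) ∈ T)) := by
  intro μ
  induction μ using Nat.strong_induction_on with
  | _ μ IH =>
  intro T lo α t m hμ hlo ht hscan
  set d := α - lo with hd
  have hαd : α = lo + d := by omega
  have hex : ∃ k, d ≤ t.getD k 0 + k := ⟨d, by omega⟩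
  have hkP : d ≤ t.getD (Nat.find hex) 0 + (Nat.find hex) := Nat.find_spec hex
  set k := Nat.find hex with hkdef
  have hkd : k ≤ d := Nat.find_le (by omega)
  have hkmin : ∀ m', m' < k → t.getD m' 0 + m' < d := by
    intro m' hm'
    have := Nat.find_min hex hm'
    omega
  rcases lt_or_ge k t.length with hklen | hklen
  · -- the scan acts within the list
    have hstep := scan_skip k t d hkd (le_of_lt hklen) hkmin
    rw [drop_cons t k hklen] at hstep
    rcases lt_trichotomy (t.getD k 0) (d - k + 1) with hx | hx | hx
    · -- hit : t.getD k 0 = d - k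
      have hx' : t.getD k 0 = d - k := by omega
      rw [scan_cons_eq hx', hscan] at hstep
      have hm : m = t.take k ++ (d - k + 1) :: t.drop (k+1) := by simpa using hstep
      have hg : ∀ i', m.getD i' 0 = if i' = k then (d - k) + 1 else t.getD i' 0 := by
        intro i'
        rw [hm, getD_glue_cons t k (by omega)]
        rcases lt_trichotomy i' k with h3 | h3 | h3
        · rw [if_pos h3, if_neg (by omega)]
        · subst h3; rw [if_neg (by omega), if_pos rfl, if_pos rfl]
        · rw [if_neg (by omega), if_neg (by omega), if_neg (by omega), getD_drop]
          congr 1; omega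
      refine ⟨insert (lo + k, d - k) T, ?_, repr_insert ht hx' hg,
        below_insert (by omega)⟩
      rcases eq_or_lt_of_le hkd with hkdd | hkdd
      · -- k = d : rule s1a
        have he : (insert (lo + k, d - k) T) = insert (α, 0) T := by
          rw [show lo + k = α from by omega, show d - k = 0 from by omega]
        rw [he]
        exact SlideAux.s1a lo α
          (nodiag_of_small ht hlo (fun m' hm' => hkmin m' (by omega)))
          (nosum_of_small ht hlo (fun m' hm' => hkmin m' (by omega))
            (by rw [← hd, ← hkdd]; exact hx'.trans (by omega)))
      · -- k < d : rule s2a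
        have he : (insert (lo + k, d - k) T) = insert (lo + k, (d - k - 1) + 1) T := by
          rw [show (d - k - 1) + 1 = d - k from by omega]
        rw [he]
        exact SlideAux.s2a lo α (lo + k) (d - k - 1)
          ((ht k _).mpr (by omega))
          (by omega) (by omega)
          (min_of_small ht hkmin)
          (fun hcon => by
            have := (ht k (d - k - 1 + 1)).mp hcon
            omega)
    · -- fail : contradiction with hscan
      rw [scan_cons_fail (by omega), hscan] at hstep
      simp at hstep
    · -- pass through : recurse
      rw [scan_cons_ge (by omega), hscan] at hstep
      cases hrec : scan (t.drop (k+1)) (d - k) with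
      | none => rw [hrec] at hstep; simp at hstep
      | some m₂ =>
        rw [hrec] at hstep
        have hm : m = t.take k ++ t.getD k 0 :: m₂ := by simpa using hstep
        have hdl : (t.drop (k+1)).length = t.length - (k+1) := by simp
        have htshift : ∀ i' j' : ℕ,
            ((lo + k + 1 + i', j') ∈ T ↔ j' < (t.drop (k+1)).getD i' 0) := by
          intro i' j'
          rw [getD_drop]
          have h5 := ht (k + 1 + i') j'
          rwa [show lo + (k + 1 + i') = lo + k + 1 + i' from by omega] at h5
        have hrec' : scan (t.drop (k+1)) (α + 1 - (lo + k + 1)) = some m₂ := by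
          rw [show α + 1 - (lo + k + 1) = d - k from by omega]; exact hrec
        obtain ⟨T', hS, hrepr, hlow⟩ :=
          IH ((t.drop (k+1)).length + (α + 1 - (lo + k + 1))) (by omega)
            T (lo + k + 1) (α + 1) (t.drop (k+1)) m₂ le_rfl (by omega) htshift hrec'
        refine ⟨T', ?_, by rw [hm]; exact repr_glue (le_of_lt hklen) ht hrepr hlow,
          fun i' j' hi' => hlow i' j' (by omega)⟩
        rcases eq_or_lt_of_le hkd with hkdd | hkdd
        · -- k = d : rule s1c
          refine SlideAux.s1c lo α T'
            (nodiag_of_small ht hlo (fun m' hm' => hkmin m' (by omega)))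
            ?_ (by omega) ?_ ?_
          · have h5 := (ht k 0).mpr (by omega)
            rwa [show lo + k = α from by omega] at h5
          · have h5 := (ht k 1).mpr (by omega)
            rwa [show lo + k = α from by omega] at h5
          · rwa [show lo + k + 1 = α + 1 from by omega] at hS
        · -- k < d : rule s2c
          refine SlideAux.s2c lo α (lo + k) (d - k - 1) T'
            ((ht k _).mpr (by omega)) (by omega) (by omega)
            (min_of_small ht hkmin) ?_ ?_ ?_
          · have h5 := (ht k (d - k)).mpr (by omega)
            rwa [show d - k - 1 + 1 = d - k from by omega]
          · have h5 := (ht k (d - k + 1)).mpr (by omega)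
            rwa [show d - k - 1 + 2 = d - k + 1 from by omega]
          · rwa [show lo + k + 1 = lo + k + 1 from rfl] at hS
  · -- the scan runs off the end of the list
    have hz : t.getD k 0 = 0 := getD_of_le t hklen
    have hkdd : k = d := by omega
    have hlen : t.length ≤ d := by omega
    have hsc := scan_over t d hlen (fun m' hm' => hkmin m' (by omega))
    rw [hscan] at hsc
    have hm := Option.some.inj hsc
    have hzd : t.getD d 0 = 0 := getD_of_le t (by omega)
    refine ⟨insert (α, 0) T,
      SlideAux.s1a lo α
        (nodiag_of_small ht hlo (fun m' hm' => hkmin m' (by omega)))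
        (nosum_of_small ht hlo (fun m' hm' => hkmin m' (by omega)) hzd),
      ?_, by rw [hαd]; exact below_insert (by omega)⟩
    have hg : ∀ i, m.getD i 0 = if i = d then 0 + 1 else t.getD i 0 := by
      intro i
      rw [hm]
      rcases lt_or_ge i t.length with h | h
      · rw [List.getD_append _ _ _ _ h, if_neg (by omega)]
      · rw [List.getD_append_right _ _ _ _ h]
        rcases lt_trichotomy i d with h3 | h3 | h3
        · rw [List.getD_append _ _ _ _ (by simp only [List.length_replicate]; omega),
            getD_replicate, if_neg (by omega), getD_of_le t h]
        · subst h3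
          rw [List.getD_append_right _ _ _ _
            (by simp only [List.length_replicate]; omega), if_pos rfl]
          simp only [List.length_replicate]
          rw [show d - t.length - (d - t.length) = 0 from by omega]
          rfl
        · rw [List.getD_append_right _ _ _ _
            (by simp only [List.length_replicate]; omega), if_neg (by omega),
            getD_of_le t h]
          simp only [List.length_replicate]
          rw [show i - t.length - (d - t.length) = (i - d - 1) + 1 from by omega,
            getD_cons_succ]
          simp
    rw [hαd]
    exact repr_insert ht hzd hg

lemma exists_repr {T : Finset Cell} (hT : IsTowerDiagram T) :
    ∃ l : List ℕ, ∀ i j : ℕ, ((i, j) ∈ T ↔ j < l.getD i 0) := by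
  classical
  set N := (T.sup fun c => c.1) + 1 with hN
  set f : ℕ → ℕ := fun i => (T.filter fun c => c.1 = i).card with hf
  refine ⟨(List.range N).map f, ?_⟩
  have hlen : ((List.range N).map f).length = N := by simp
  have hgetD : ∀ i, i < N → ((List.range N).map f).getD i 0 = f i := by
    intro i hi
    rw [getD_getElem _ _ (by simp [hi])]
    simp
  have hmem_iff : ∀ i j, ((i, j) ∈ T ↔ j < f i) := by
    intro i j
    constructor
    · intro hmem
      have hsub : (Finset.range (j+1)).image (fun j' => ((i, j') : Cell))
          ⊆ T.filter fun c => c.1 = i := by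
        intro c hc
        simp only [Finset.mem_image, Finset.mem_range] at hc
        obtain ⟨j', hj', rfl⟩ := hc
        exact Finset.mem_filter.mpr ⟨(hT _ hmem).2 j' (by omega), rfl⟩
      have hinj : Function.Injective (fun j' => ((i, j') : Cell)) := by
        intro a b hab
        simpa using congrArg Prod.snd hab
      have hcard : (Finset.range (j+1)).card
          ≤ (T.filter fun c => c.1 = i).card := by
        rw [← Finset.card_image_of_injective _ hinj]
        exact Finset.card_le_card hsub
      simpa using hcard
    · intro hj
      by_contra hmem
      have hsub : (T.filter fun c => c.1 = i)
          ⊆ (Finset.range j).image (fun j' => ((i, j') : Cell)) := by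
        intro c hc
        simp only [Finset.mem_filter] at hc
        obtain ⟨hcT, hci⟩ := hc
        have hc2 : c.2 < j := by
          by_contra hc2
          push_neg at hc2
          have := (hT c hcT).2 j hc2
          rw [hci] at this
          exact hmem this
        refine Finset.mem_image.mpr ⟨c.2, Finset.mem_range.mpr hc2, ?_⟩
        rw [← hci]
      have hcard := Finset.card_le_card hsub
      have hle := Finset.card_image_le (s := Finset.range j)
        (f := fun j' => ((i, j') : Cell))
      simp only [Finset.card_range] at hle
      have : f i ≤ j := le_trans hcard hle
      omega
  intro i j
  rcases lt_or_ge i N with h | h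
  · rw [hgetD i h]; exact hmem_iff i j
  · rw [getD_of_le _ (by omega)]
    simp only [Nat.not_lt_zero, iff_false]
    intro hmem
    have := Finset.le_sup (f := fun c : Cell => c.1) hmem
    simp only at this
    omega

lemma slidesF {T V : Finset Cell} {α : ℕ} {l : List ℕ}
    (ht : ∀ i j : ℕ, ((i, j) ∈ T ↔ j < l.getD i 0))
    (h : Slides T α V) :
    ∃ m, scan l α = some m ∧ ∀ i j : ℕ, ((i, j) ∈ V ↔ j < m.getD i 0) := by
  obtain ⟨m, hm, hr, -⟩ := bridgeF h l (by omega) (fun i j => by simpa using ht i j)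
  rw [show α - 0 = α from by omega] at hm
  exact ⟨m, hm, fun i j => by simpa using hr i j⟩

lemma slidesB {T : Finset Cell} {α : ℕ} {l m : List ℕ}
    (ht : ∀ i j : ℕ, ((i, j) ∈ T ↔ j < l.getD i 0))
    (hm : scan l α = some m) :
    ∃ V, Slides T α V ∧ ∀ i j : ℕ, ((i, j) ∈ V ↔ j < m.getD i 0) := by
  obtain ⟨V, hS, hr, -⟩ := bridgeB (l.length + α) T 0 α l m (by omega) (by omega)
    (fun i j => by simpa using ht i j)
    (by rw [show α - 0 = α from by omega]; exact hm)
  exact ⟨V, hS, fun i j => by simpa using hr i j⟩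

lemma repr_unique {U U' : Finset Cell} {L : List ℕ}
    (h1 : ∀ i j : ℕ, ((i, j) ∈ U ↔ j < L.getD i 0))
    (h2 : ∀ i j : ℕ, ((i, j) ∈ U' ↔ j < L.getD i 0)) : U = U' := by
  ext ⟨i, j⟩
  rw [h1, h2]

theorem slides_braid'
    (T : Finset Cell) (hT : IsTowerDiagram T)
    (α : ℕ) (hα : 1 ≤ α) :
    (∃ U : Finset Cell,
        (∃ V W, Slides T α V ∧ Slides V (α + 1) W ∧ Slides W α U) ∧
        (∃ V' W', Slides T (α + 1) V' ∧ Slides V' α W' ∧ Slides W' (α + 1) U)) ∨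
      ((¬ ∃ U V W, Slides T α V ∧ Slides V (α + 1) W ∧ Slides W α U) ∧
        (¬ ∃ U V' W', Slides T (α + 1) V' ∧ Slides V' α W' ∧ Slides W' (α + 1) U)) := by
  obtain ⟨l, hl⟩ := exists_repr hT
  have hbraid := scan_braid l α
  cases hE : (scan l α).bind (fun u => (scan u (α+1)).bind fun v => scan v α) with
  | some L =>
    left
    have hE2 : (scan l (α+1)).bind (fun u => (scan u α).bind fun v => scan v (α+1))
        = some L := hbraid.symm.trans hE
    rcases h1 : scan l α with _ | m1
    · rw [h1] at hE; simp at hE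
    rw [h1] at hE
    simp only [Option.bind_some] at hE
    rcases h2 : scan m1 (α+1) with _ | m2
    · rw [h2] at hE; simp at hE
    rw [h2] at hE
    simp only [Option.bind_some] at hE
    rcases h3 : scan m2 α with _ | m3
    · rw [h3] at hE; simp at hE
    rw [h3] at hE
    have hL : m3 = L := by simpa using hE
    rcases g1 : scan l (α+1) with _ | n1
    · rw [g1] at hE2; simp at hE2
    rw [g1] at hE2
    simp only [Option.bind_some] at hE2
    rcases g2 : scan n1 α with _ | n2
    · rw [g2] at hE2; simp at hE2
    rw [g2] at hE2
    simp only [Option.bind_some] at hE2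
    rcases g3 : scan n2 (α+1) with _ | n3
    · rw [g3] at hE2; simp at hE2
    rw [g3] at hE2
    have hL' : n3 = L := by simpa using hE2
    obtain ⟨V, hV, hVr⟩ := slidesB hl h1
    obtain ⟨W, hW, hWr⟩ := slidesB hVr h2
    obtain ⟨U, hU, hUr⟩ := slidesB hWr h3
    obtain ⟨V', hV', hVr'⟩ := slidesB hl g1
    obtain ⟨W', hW', hWr'⟩ := slidesB hVr' g2
    obtain ⟨U', hU', hUr'⟩ := slidesB hWr' g3
    have hUU : U' = U := by
      apply repr_unique (L := L)
      · rw [← hL']; exact hUr'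
      · rw [← hL]; exact hUr
    exact ⟨U, ⟨V, W, hV, hW, hU⟩, ⟨V', W', hV', hW', hUU ▸ hU'⟩⟩
  | none =>
    right
    have hE2 : (scan l (α+1)).bind (fun u => (scan u α).bind fun v => scan v (α+1))
        = none := hbraid.symm.trans hE
    constructor
    · rintro ⟨U, V, W, hV, hW, hU⟩
      obtain ⟨m1, hm1, hVr⟩ := slidesF hl hV
      obtain ⟨m2, hm2, hWr⟩ := slidesF hVr hW
      obtain ⟨m3, hm3, hUr⟩ := slidesF hWr hU
      rw [hm1] at hE
      simp only [Option.bind_some] at hE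
      rw [hm2] at hE
      simp only [Option.bind_some] at hE
      rw [hm3] at hE
      exact Option.some_ne_none _ hE
    · rintro ⟨U, V', W', hV, hW, hU⟩
      obtain ⟨m1, hm1, hVr⟩ := slidesF hl hV
      obtain ⟨m2, hm2, hWr⟩ := slidesF hVr hW
      obtain ⟨m3, hm3, hUr⟩ := slidesF hWr hU
      rw [hm1] at hE2
      simp only [Option.bind_some] at hE2
      rw [hm2] at hE2
      simp only [Option.bind_some] at hE2
      rw [hm3] at hE2
      exact Option.some_ne_none _ hE2

end SBraid

/-- Either both iterated slides `α ↘ ((α+1) ↘ (α ↘ T))` and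
`(α+1) ↘ (α ↘ ((α+1) ↘ T))` are defined and equal, or both terminate without
result. -/
theorem slides_braid
    (T : Finset Cell) (hT : IsTowerDiagram T)
    (α : ℕ) (hα : 1 ≤ α) :
    (∃ U : Finset Cell,
        (∃ V W, Slides T α V ∧ Slides V (α + 1) W ∧ Slides W α U) ∧
        (∃ V' W', Slides T (α + 1) V' ∧ Slides V' α W' ∧ Slides W' (α + 1) U)) ∨
      ((¬ ∃ U V W, Slides T α V ∧ Slides V (α + 1) W ∧ Slides W α U) ∧
        (¬ ∃ U V' W', Slides T (α + 1) V' ∧ Slides V' α W' ∧ Slides W' (α + 1) U)) :=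
  SBraid.slides_braid' T hT α hα
end

section
/- Let α = α₁...αₙ be a word in SRW(ℤ⁺). Then the recording tableau R(α) is a standard tower tableau. -/
section Aux

/-- Flight paths are preserved by inserting a cell on a weakly higher diagonal. -/
lemma flightPath_insert {T : Finset Cell} (c : Cell) :
    ∀ {p P}, FlightPath T p P → p.1 + p.2 ≤ c.1 + c.2 → FlightPath (insert c T) p P := by
  intro p P h
  induction h with
  | direct i j hmem hnone =>
    intro hc
    refine .direct i j (Finset.mem_insert_of_mem hmem) ?_
    intro q hq hcon
    rcases Finset.mem_insert.mp hq with rfl | hq'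
    · omega
    · exact hnone q hq' hcon
  | zigzag i j i' j' P hmem hmem' hleft hdiag hclosest hup hrec ih =>
    intro hc
    refine .zigzag i j i' j' P (Finset.mem_insert_of_mem hmem)
      (Finset.mem_insert_of_mem hmem') hleft hdiag ?_ (Finset.mem_insert_of_mem hup)
      (ih (by omega))
    intro q hq hq1 hq2
    rcases Finset.mem_insert.mp hq with rfl | hq'
    · omega
    · exact hclosest q hq' hq1 hq2

/-- The predecessor invariant for the sliding recursion: either we are at the
outermost call, or the previous recursion step left a cell `p` just left of
column `lo`, on the diagonal `α - 1`, with a cell on top and a flight path. -/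
def Pre (T : Finset Cell) (lo α : ℕ) : Prop :=
  lo = 0 ∨ ∃ p : Cell, p ∈ T ∧ p.1 + 1 = lo ∧ p.1 + p.2 + 1 = α ∧
    (p.1, p.2 + 1) ∈ T ∧ ∃ P, FlightPath T p P

lemma pre_insert {T : Finset Cell} {lo α : ℕ} (c : Cell) (hc : α ≤ c.1 + c.2)
    (h : Pre T lo α) : Pre (insert c T) lo α := by
  rcases h with rfl | ⟨p, h1, h2, h3, h4, P, hP⟩
  · exact Or.inl rfl
  · exact Or.inr ⟨p, Finset.mem_insert_of_mem h1, h2, h3, Finset.mem_insert_of_mem h4,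
      P, flightPath_insert c hP (by omega)⟩

/-- A cell of sum `α` whose strictly-left diagonal neighbours in columns `≥ lo`
are excluded has a flight path, given the predecessor invariant. -/
lemma flight_of_pre {T : Finset Cell} {lo α x y : ℕ}
    (hxy : (x, y) ∈ T) (hsum : x + y = α) (hlox : lo ≤ x)
    (hmin : ∀ q ∈ T, lo ≤ q.1 → q.1 + q.2 + 1 = α → x ≤ q.1)
    (hpre : Pre T lo α) :
    ∃ P, FlightPath T (x, y) P := by
  rcases hpre with rfl | ⟨⟨p1, p2⟩, hpT, hplo, hpd, hpup, P, hP⟩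
  · refine ⟨{(x, y)}, .direct x y hxy ?_⟩
    intro q hq hcon
    obtain ⟨h1, h2⟩ := hcon
    have := hmin q hq (Nat.zero_le _) (by omega)
    omega
  · refine ⟨_, .zigzag x y p1 p2 P hxy hpT (by omega) (by omega) ?_ hpup hP⟩
    intro q hq hq1 hq2
    by_cases h : lo ≤ q.1
    · exact absurd (hmin q hq h (by omega)) (by omega)
    · omega

/-- Main lemma on slides: a non-terminating slide inserts a single new cell,
preserves being a tower diagram, and the new cell is a corner cell. -/
lemma slideAux_spec {T : Finset Cell} (htd : IsTowerDiagram T) :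
    ∀ {lo α T'}, SlideAux T lo α T' → 1 ≤ α → lo ≤ α → Pre T lo α →
    ∃ c : Cell, c ∉ T ∧ T' = insert c T ∧ IsTowerDiagram (insert c T) ∧
      (c.1, c.2 + 1) ∉ insert c T ∧ ∃ P, FlightPath (insert c T) c P := by
  intro lo α T' h
  induction h with
  | s1a lo α h1 h2 =>
    intro hα hloα hpre
    have hc0 : (α, 0) ∉ T := fun h => (h2 (α, 0) h hloα) rfl
    refine ⟨(α, 0), hc0, rfl, ?_, ?_, ?_⟩
    · intro d hd
      rcases Finset.mem_insert.mp hd with rfl | hd'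
      · exact ⟨hα, fun j' hj' => by
          have : j' = 0 := by omega
          subst this; exact Finset.mem_insert_self _ _⟩
      · exact ⟨(htd d hd').1, fun j' hj' =>
          Finset.mem_insert_of_mem ((htd d hd').2 j' hj')⟩
    · intro hmem
      rcases Finset.mem_insert.mp hmem with heq | hT1
      · simp at heq
      · exact hc0 ((htd _ hT1).2 0 (by omega))
    · refine flight_of_pre (lo := lo) (α := α) (Finset.mem_insert_self _ _) (by omega) hloα
        ?_ (pre_insert _ (by omega) hpre)
      intro q hq hql hqd
      rcases Finset.mem_insert.mp hq with rfl | hq'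
      · omega
      · exact absurd hqd (h1 q hq' hql)
  | s1c lo α T' h1 h2 h2' h3 hrec ih =>
    intro hα hloα hpre
    refine ih (by omega) le_rfl (Or.inr ⟨(α, 0), h2, rfl, by omega, h3, ?_⟩)
    refine flight_of_pre (lo := lo) (α := α) h2 (by omega) hloα ?_ hpre
    intro q hq hql hqd
    exact absurd hqd (h1 q hq hql)
  | s2a lo α i j hmem hlo hdiag hmin htop =>
    intro hα hloα hpre
    have hi1 : 1 ≤ i := (htd _ hmem).1
    refine ⟨(i, j + 1), htop, rfl, ?_, ?_, ?_⟩
    · intro d hd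
      rcases Finset.mem_insert.mp hd with rfl | hd'
      · refine ⟨hi1, fun j' hj' => ?_⟩
        rcases Nat.lt_or_ge j' (j + 1) with h' | h'
        · exact Finset.mem_insert_of_mem ((htd _ hmem).2 j' (by omega))
        · have : j' = j + 1 := by omega
          subst this; exact Finset.mem_insert_self _ _
      · exact ⟨(htd d hd').1, fun j' hj' =>
          Finset.mem_insert_of_mem ((htd d hd').2 j' hj')⟩
    · intro hmem2
      rcases Finset.mem_insert.mp hmem2 with heq | hT2
      · simp at heq
      · exact htop ((htd _ hT2).2 (j + 1) (by omega))
    · refine flight_of_pre (lo := lo) (α := α) (Finset.mem_insert_self _ _) (by omega) hlo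
        ?_ (pre_insert _ (by omega) hpre)
      intro q hq hql hqd
      rcases Finset.mem_insert.mp hq with rfl | hq'
      · omega
      · exact hmin q hq' hql hqd
  | s2c lo α i j T' hmem hlo hdiag hmin h1 h2 hrec ih =>
    intro hα hloα hpre
    refine ih (by omega) (by omega) (Or.inr ⟨(i, j + 1), h1, rfl, by omega, h2, ?_⟩)
    exact flight_of_pre (lo := lo) (α := α) h1 (by omega) hlo hmin hpre

lemma labelLE_full {R : Finset (Cell × ℕ)} {k : ℕ} (h : ∀ p ∈ R, p.2 ≤ k) :
    labelLE R k = R :=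
  Finset.filter_true_of_mem h

lemma shapeOf_insert (c : Cell) (k : ℕ) (R : Finset (Cell × ℕ)) :
    shapeOf (insert (c, k) R) = insert c (shapeOf R) := by
  simp [shapeOf, Finset.image_insert]

/-- The full invariant carried through the SR induction. -/
lemma sr_invariant : ∀ {w : List ℕ} {R : Finset (Cell × ℕ)}, SRRecord w R → IsPosWord w →
    R.card = w.length ∧
    R.image Prod.snd = Finset.Icc 1 w.length ∧
    (∀ p ∈ R, ∀ q ∈ R, p.1 = q.1 → p = q) ∧
    (∀ k : ℕ, IsTowerDiagram (shapeOf (labelLE R k))) ∧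
    (∀ p ∈ R, IsCornerCell (shapeOf (labelLE R p.2)) p.1) := by
  intro w R h
  induction h with
  | nil =>
    intro _
    refine ⟨rfl, by simp, by simp, ?_, by simp⟩
    intro k q hq
    simp [labelLE, shapeOf] at hq
  | @snoc w R a c hw hc ha ih =>
    intro hpos
    have hposw : IsPosWord w := fun x hx => hpos x (by simp [hx])
    have ha1 : 1 ≤ a := hpos a (by simp)
    obtain ⟨hcard, himg, hinj, htd, hcorner⟩ := ih hposw
    set n := w.length with hn
    have hle : ∀ p ∈ R, p.2 ≤ n := by
      intro p hp
      have : p.2 ∈ R.image Prod.snd := Finset.mem_image_of_mem _ hp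
      rw [himg] at this
      exact (Finset.mem_Icc.mp this).2
    have hfull : ∀ k, n ≤ k → labelLE R k = R := fun k hk =>
      labelLE_full (fun p hp => le_trans (hle p hp) hk)
    have hTD_R : IsTowerDiagram (shapeOf R) := by
      have := htd n
      rwa [hfull n le_rfl] at this
    obtain ⟨c', hc'T, hTeq, hTD', hcap, hflight⟩ :=
      slideAux_spec hTD_R ha ha1 (Nat.zero_le a) (Or.inl rfl)
    have hcc' : c = c' := by
      have : c ∈ insert c' (shapeOf R) := hTeq ▸ Finset.mem_insert_self c _
      rcases Finset.mem_insert.mp this with h | h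
      · exact h
      · exact absurd h hc
    subst hcc'
    have hnotmem : (c, n + 1) ∉ R := fun h => hc (Finset.mem_image_of_mem _ h)
    have hlen : (w ++ [a]).length = n + 1 := by simp [hn]
    have hlab_hi : ∀ k, n + 1 ≤ k →
        labelLE (insert (c, n + 1) R) k = insert (c, n + 1) R := by
      intro k hk
      refine labelLE_full ?_
      intro p hp
      rcases Finset.mem_insert.mp hp with rfl | hp'
      · exact hk
      · exact le_trans (hle p hp') (by omega)
    have hlab_lo : ∀ k, k ≤ n →
        labelLE (insert (c, n + 1) R) k = labelLE R k := by
      intro k hk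
      unfold labelLE
      rw [Finset.filter_insert, if_neg (by omega)]
    refine ⟨?_, ?_, ?_, ?_, ?_⟩
    · rw [Finset.card_insert_of_notMem hnotmem, hcard, hlen]
    · rw [Finset.image_insert, himg, hlen]
      ext x
      simp only [Finset.mem_insert, Finset.mem_Icc]
      omega
    · intro p hp q hq hpq
      rcases Finset.mem_insert.mp hp with rfl | hp' <;>
        rcases Finset.mem_insert.mp hq with rfl | hq'
      · rfl
      · exact absurd (show c ∈ shapeOf R by
          rw [show c = q.1 from hpq]; exact Finset.mem_image_of_mem _ hq') hc
      · exact absurd (show c ∈ shapeOf R by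
          rw [show c = p.1 from hpq.symm]; exact Finset.mem_image_of_mem _ hp') hc
      · exact hinj p hp' q hq' hpq
    · intro k
      rcases Nat.lt_or_ge k (n + 1) with hk | hk
      · rw [hlab_lo k (by omega)]
        exact htd k
      · rw [hlab_hi k hk, shapeOf_insert]
        exact hTD'
    · intro p hp
      rcases Finset.mem_insert.mp hp with rfl | hp'
      · rw [hlab_hi (n + 1) le_rfl, shapeOf_insert]
        exact ⟨Finset.mem_insert_self _ _, hcap, hflight⟩
      · rw [hlab_lo p.2 (hle p hp')]
        exact hcorner p hp'

end Aux

/-- The recording tableau of any word in `SRW(ℤ⁺)` is a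
standard tower tableau. -/
theorem recording_tableau_standard
    (w : List ℕ) (hw : IsPosWord w)
    (R : Finset (Cell × ℕ)) (hR : SRRecord w R) :
    IsStandardTowerTableau R := by
  obtain ⟨hcard, himg, hinj, htd, hcorner⟩ := sr_invariant hR hw
  have hle : ∀ p ∈ R, p.2 ≤ w.length := by
    intro p hp
    have : p.2 ∈ R.image Prod.snd := Finset.mem_image_of_mem _ hp
    rw [himg] at this
    exact (Finset.mem_Icc.mp this).2
  have hfull : labelLE R w.length = R := labelLE_full hle
  refine ⟨⟨?_, hinj, ?_⟩, ?_⟩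
  · have := htd w.length
    rwa [hfull] at this
  · rw [hcard]; exact himg
  · intro p hp
    exact ⟨htd p.2, hcorner p hp⟩
end
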